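/- arXiv:2011.04803 — 5 statements merged into one kernel-verified Lean document; each statement's English description precedes it below -/
import Mathlib

section
/- Let $0 < c < 1$ and for integers $t \geq 1$ define $a_t = \sum_{s=1}^{t} \frac{c^{t-s}}{s}$. Then $a_t \in O(1/t)$, i.e., there exist a constant $M > 0$ and an index $T \geq 1$ such that $a_t \leq M/t$ for all $t \geq T$. -/
lemma geo_harm_rec (c : ℝ) (t : ℕ) (ht : 1 ≤ t) :
    (∑ s ∈ Finset.Icc 1 (t + 1), c ^ (t + 1 - s) / (s : ℝ)) =
      c * (∑ s ∈ Finset.Icc 1 t, c ^ (t - s) / (s : ℝ)) + 1 / ((t : ℝ) + 1) := by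
  rw [Finset.sum_Icc_succ_top (by omega : 1 ≤ t + 1), Finset.mul_sum]
  congr 1
  · apply Finset.sum_congr rfl
    intro s hs
    rw [Finset.mem_Icc] at hs
    rw [show t + 1 - s = t - s + 1 by omega, pow_succ]
    ring
  · simp

lemma geo_harm_key (c M t : ℝ) (hc0 : 0 < c) (h1c : 0 < 1 - c) (ht : 0 < t)
    (hM2 : 2 ≤ M * (1 - c)) (htc : 2 * c ≤ t * (1 - c)) :
    c * (M / t) + 1 / (t + 1) ≤ M / (t + 1) := by
  have hM0 : 0 < M := by nlinarith
  have ht1 : (0:ℝ) < t + 1 := by linarith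
  rw [mul_div_assoc', div_add_div _ _ (ne_of_gt ht) (ne_of_gt ht1),
    div_le_div_iff₀ (by positivity) ht1]
  nlinarith [mul_nonneg (by linarith : (0:ℝ) ≤ M * (1 - c) - 2) ht.le,
    mul_nonneg (by linarith : (0:ℝ) ≤ t * (1 - c) - 2 * c) hM0.le]

/-- Lemma 1 of the paper: for `0 < c < 1`, the sequence
`a t = ∑_{s=1}^{t} c^(t-s) / s` is `O(1/t)`. -/
theorem geometric_times_harmonic_sequence_isBigO
    (c : ℝ) (hc0 : 0 < c) (hc1 : c < 1) :
    ∃ M : ℝ, 0 < M ∧ ∃ T : ℕ, 1 ≤ T ∧ ∀ t : ℕ, T ≤ t →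
      (∑ s ∈ Finset.Icc 1 t, c ^ (t - s) / (s : ℝ)) ≤ M / (t : ℝ) := by
  have h1c : (0:ℝ) < 1 - c := by linarith
  set T : ℕ := ⌈2 * c / (1 - c)⌉₊ + 1 with hT
  have hT1 : 1 ≤ T := by omega
  have hTc : 2 * c / (1 - c) ≤ (T : ℝ) := by
    calc 2 * c / (1 - c) ≤ (⌈2 * c / (1 - c)⌉₊ : ℝ) := Nat.le_ceil _
    _ ≤ (T : ℝ) := by exact_mod_cast Nat.le_succ _
  have hTc' : 2 * c ≤ (T : ℝ) * (1 - c) := by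
    rw [div_le_iff₀ h1c] at hTc; linarith
  set A : ℝ := ∑ s ∈ Finset.Icc 1 T, c ^ (T - s) / (s : ℝ) with hA
  have hA0 : 0 ≤ A := by
    apply Finset.sum_nonneg
    intro s hs
    positivity
  set M : ℝ := 2 / (1 - c) + (T : ℝ) * A with hM
  have hM0 : 0 < M := by positivity
  have hM2 : 2 ≤ M * (1 - c) := by
    have h3 : 0 ≤ (T : ℝ) * A := by positivity
    have h2 : 2 / (1 - c) * (1 - c) = 2 := by field_simp
    rw [hM, add_mul, h2]
    nlinarith [mul_nonneg h3 h1c.le]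
  refine ⟨M, hM0, T, hT1, ?_⟩
  intro t ht
  induction t, ht using Nat.le_induction with
  | base =>
      rw [div_eq_mul_inv, ← hA]
      rw [← div_eq_mul_inv, le_div_iff₀ (by exact_mod_cast Nat.pos_of_ne_zero (by omega))]
      have h4 : (0:ℝ) < 2 / (1 - c) := by positivity
      rw [hM]; nlinarith
  | succ t ht' ih =>
      have ht1 : 1 ≤ t := le_trans hT1 ht'
      have htpos : (0:ℝ) < t := by exact_mod_cast ht1
      have ht1pos : (0:ℝ) < (t : ℝ) + 1 := by linarith
      have htc : 2 * c ≤ (t : ℝ) * (1 - c) := by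
        have : (T : ℝ) ≤ (t : ℝ) := by exact_mod_cast ht'
        nlinarith
      rw [geo_harm_rec c t ht1]
      have step : c * (M / (t : ℝ)) + 1 / ((t : ℝ) + 1) ≤ M / ((t : ℝ) + 1) :=
        geo_harm_key c M t hc0 h1c htpos hM2 htc
      calc c * (∑ s ∈ Finset.Icc 1 t, c ^ (t - s) / (s : ℝ)) + 1 / ((t : ℝ) + 1)
          ≤ c * (M / (t : ℝ)) + 1 / ((t : ℝ) + 1) := by
            have := ih
            nlinarith
        _ ≤ M / ((t : ℝ) + 1) := step
        _ = M / ((t + 1 : ℕ) : ℝ) := by push_cast; ring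
end

section
/- Consider the noisy quadratic problem with symmetric matrix $H$ and i.i.d. square-integrable random vectors $\xi_0, \xi_1, \dots$ in $\mathbb{R}^d$ with mean $\bar\xi$ and covariance $C$, and suppose $\Sigma := H C H^T$ is positive definite. Let $(\theta_t)$ be any sequence of parameters where $\theta_t$ is measurable with respect to $\xi_0,\dots,\xi_{t-1}$ (e.g., generated by the filter-based updates), let $g_t = H(\theta_t - \xi_t)$ be the stochastic gradient, and define the filtered gradient by $m_0 = g_0$, $P_0 = \Sigma$, and for $t \geq 1$: $K_t = P_{t-1}(P_{t-1}+\Sigma)^{-1}$, $m_t = (I - K_t)(m_{t-1} + H(\theta_t - \theta_{t-1})) + K_t g_t$, $P_t = (I-K_t)P_{t-1}$. Then for every $t \geq 0$, $\mathbb{E}\big[(m_t - \nabla f(\theta_t))(m_t - \nabla f(\theta_t))^T\big] = P_t = \frac{1}{t+1}\Sigma$, where $\nabla f(\theta) = H(\theta - \bar\xi)$; in particular $\mathbb{E}[\|m_t - \nabla f(\theta_t)\|^2] = \frac{1}{t+1}\operatorname{trace}(\Sigma)$. -/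
open MeasureTheory Matrix ProbabilityTheory

lemma meka_l2_integrable_mul {Ω : Type*} [MeasurableSpace Ω] {μ : Measure Ω}
    {f g : Ω → ℝ} (hf : MemLp f 2 μ) (hg : MemLp g 2 μ) :
    Integrable (fun ω => f ω * g ω) μ := by
  have h1 : Integrable (fun ω => (f ω + g ω) ^ 2) μ := by
    simpa using (hf.add hg).integrable_sq
  have h : Integrable (fun ω => ((f ω + g ω) ^ 2 - f ω ^ 2 - g ω ^ 2) / 2) μ :=
    ((h1.sub hf.integrable_sq).sub hg.integrable_sq).div_const 2
  exact h.congr (ae_of_all _ fun ω => by ring)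

lemma meka_matrix_smul_inv {d : ℕ} (A : Matrix (Fin d) (Fin d) ℝ) (hA : IsUnit A.det)
    {c : ℝ} (hc : c ≠ 0) : (c • A)⁻¹ = c⁻¹ • A⁻¹ := by
  apply Matrix.inv_eq_right_inv
  rw [smul_mul_assoc, mul_smul_comm, smul_smul, mul_inv_cancel₀ hc,
    one_smul, Matrix.mul_nonsing_inv A hA]

/-- In the noisy quadratic problem with i.i.d. square-integrable locations `ξ t` and
positive definite gradient-noise covariance `Σ = H C Hᵀ`, the Kalman-filtered gradient
`m t` (with `m 0 = g 0`, `P 0 = Σ`, `K (t+1) = P t (P t + Σ)⁻¹`,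
`m (t+1) = (I - K (t+1))(m t + H (θ (t+1) - θ t)) + K (t+1) g (t+1)`,
`P (t+1) = (I - K (t+1)) P t`) satisfies, for parameters `θ t` depending only on
`ξ 0, …, ξ (t-1)`:
`𝔼[(m t - ∇f(θ t))(m t - ∇f(θ t))ᵀ] = P t = Σ / (t+1)` and
`𝔼[‖m t - ∇f(θ t)‖²] = trace Σ / (t+1)`. -/
theorem meka_filter_error_covariance_noisy_quadratic
    {d : ℕ} (H : Matrix (Fin d) (Fin d) ℝ) (hH : H.IsSymm)
    {Ω : Type*} [MeasurableSpace Ω] (μ : Measure Ω) [IsProbabilityMeasure μ]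
    (ξ : ℕ → Ω → Fin d → ℝ) (hmeas : ∀ t, Measurable (ξ t))
    (hindep : iIndepFun ξ μ)
    (hident : ∀ t, Measure.map (ξ t) μ = Measure.map (ξ 0) μ)
    (hL2 : ∀ t i, MemLp (fun ω => ξ t ω i) 2 μ)
    (xbar : Fin d → ℝ) (hxbar : ∀ i, xbar i = ∫ ω, ξ 0 ω i ∂μ)
    (C : Matrix (Fin d) (Fin d) ℝ)
    (hC : ∀ i j, C i j = ∫ ω, (ξ 0 ω i - xbar i) * (ξ 0 ω j - xbar j) ∂μ)
    (S : Matrix (Fin d) (Fin d) ℝ) (hS : S = H * C * Hᵀ) (hSpd : S.PosDef)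
    -- `θ t` is measurable with respect to the σ-algebra generated by `ξ 0, …, ξ (t-1)`
    (θ : ℕ → Ω → Fin d → ℝ)
    (hθ : ∀ t : ℕ, Measurable[MeasurableSpace.comap
        (fun ω => fun s : Fin t => ξ (s : ℕ) ω) inferInstance] (θ t))
    -- the stochastic gradient
    (g : ℕ → Ω → Fin d → ℝ) (hg : ∀ t ω, g t ω = H.mulVec (θ t ω - ξ t ω))
    -- the filter recursion
    (m : ℕ → Ω → Fin d → ℝ) (P K : ℕ → Matrix (Fin d) (Fin d) ℝ)
    (hm0 : ∀ ω, m 0 ω = g 0 ω) (hP0 : P 0 = S)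
    (hK : ∀ t : ℕ, K (t + 1) = P t * (P t + S)⁻¹)
    (hm : ∀ (t : ℕ) ω, m (t + 1) ω =
      (1 - K (t + 1)).mulVec (m t ω + H.mulVec (θ (t + 1) ω - θ t ω)) +
        (K (t + 1)).mulVec (g (t + 1) ω))
    (hP : ∀ t : ℕ, P (t + 1) = (1 - K (t + 1)) * P t) :
    ∀ t : ℕ,
      (∀ i j, ∫ ω, (m t ω i - H.mulVec (θ t ω - xbar) i) *
          (m t ω j - H.mulVec (θ t ω - xbar) j) ∂μ = P t i j) ∧
      P t = ((t : ℝ) + 1)⁻¹ • S ∧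
      ∫ ω, ∑ i, (m t ω i - H.mulVec (θ t ω - xbar) i) ^ 2 ∂μ
        = ((t : ℝ) + 1)⁻¹ * S.trace := by
  classical
  have hSdet : IsUnit S.det := hSpd.det_pos.ne'.isUnit
  -- the key Kalman-gain computation for scalar multiples of S
  have hKcomp : ∀ c : ℝ, 0 < c → (c • S) * (c • S + S)⁻¹
      = (c / (c + 1)) • (1 : Matrix (Fin d) (Fin d) ℝ) := by
    intro c hc
    have h1 : c • S + S = (c + 1) • S := by rw [add_smul, one_smul]
    have hc1 : c + 1 ≠ 0 := by positivity
    rw [h1, meka_matrix_smul_inv S hSdet hc1, mul_smul_comm, smul_mul_assoc,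
      Matrix.mul_nonsing_inv S hSdet, smul_smul]
    congr 1
    field_simp
  -- the explicit formula for P
  have hPformula : ∀ t : ℕ, P t = ((t : ℝ) + 1)⁻¹ • S := by
    intro t
    induction t with
    | zero => simpa using hP0
    | succ t ih =>
      have ht1 : (0 : ℝ) < ((t : ℝ) + 1)⁻¹ := by positivity
      rw [hP t, hK t, ih, hKcomp _ ht1, sub_mul, one_mul, smul_mul_assoc, one_mul,
        smul_smul, ← sub_smul]
      congr 1
      have h2 : ((t : ℝ) + 1) ≠ 0 := by positivity
      have h3 : ((t : ℝ) + 1)⁻¹ + 1 ≠ 0 := by positivity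
      push_cast
      field_simp
      ring
  -- the explicit formula for K
  have hKformula : ∀ t : ℕ, K (t + 1) = ((t : ℝ) + 2)⁻¹ • (1 : Matrix (Fin d) (Fin d) ℝ) := by
    intro t
    have ht1 : (0 : ℝ) < ((t : ℝ) + 1)⁻¹ := by positivity
    rw [hK t, hPformula t, hKcomp _ ht1]
    congr 1
    have h2 : ((t : ℝ) + 1) ≠ 0 := by positivity
    field_simp
    ring
  -- the error identity : the filter error is the average of the i.i.d. noises
  have he : ∀ (t : ℕ) (ω : Ω), m t ω - H.mulVec (θ t ω - xbar)
      = ((t : ℝ) + 1)⁻¹ • ∑ s ∈ Finset.range (t + 1), H.mulVec (xbar - ξ s ω) := by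
    intro t
    induction t with
    | zero =>
      intro ω
      rw [hm0 ω, hg 0 ω, Finset.sum_range_one]
      simp only [Nat.cast_zero, zero_add, inv_one, one_smul]
      rw [← Matrix.mulVec_sub]
      congr 1
      abel
    | succ t ih =>
      intro ω
      have ht1 : ((t : ℝ) + 1) ≠ 0 := by positivity
      have ht2 : ((t : ℝ) + 2) ≠ 0 := by positivity
      have ht2' : ((t : ℝ) + 1 + 1) ≠ 0 := by positivity
      have hm' : m t ω = ((t : ℝ) + 1)⁻¹ • ∑ s ∈ Finset.range (t + 1),
          H.mulVec (xbar - ξ s ω) + H.mulVec (θ t ω - xbar) := by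
        rw [← ih ω]; abel
      rw [Finset.sum_range_succ, hm t ω, hg (t + 1) ω, hKformula t, hm']
      simp only [Matrix.sub_mulVec, Matrix.smul_mulVec, Matrix.one_mulVec,
        Matrix.mulVec_add, Matrix.mulVec_sub]
      push_cast
      match_scalars <;> field_simp <;> ring
  -- measurability of the noise maps
  have hφrw : ∀ (i : Fin d) (x : Fin d → ℝ),
      H.mulVec (xbar - x) i = ∑ k, H i k * (xbar k - x k) := by
    intro i x
    simp [Matrix.mulVec, dotProduct]
  have hφmeas : ∀ i : Fin d, Measurable fun x : Fin d → ℝ => H.mulVec (xbar - x) i := by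
    intro i
    have : (fun x : Fin d → ℝ => H.mulVec (xbar - x) i)
        = fun x => ∑ k, H i k * (xbar k - x k) := funext fun x => hφrw i x
    rw [this]
    exact Finset.measurable_sum _ fun k _ =>
      (measurable_const.sub (measurable_pi_apply k)).const_mul _
  -- the noises are square integrable
  have hη2 : ∀ (s : ℕ) (i : Fin d), MemLp (fun ω => H.mulVec (xbar - ξ s ω) i) 2 μ := by
    intro s i
    have : (fun ω => H.mulVec (xbar - ξ s ω) i)
        = fun ω => ∑ k, H i k * (xbar k - ξ s ω k) := funext fun ω => hφrw i _
    rw [this]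
    refine memLp_finset_sum _ fun k _ => ?_
    have h2 : MemLp (fun ω => xbar k - ξ s ω k) 2 μ := (memLp_const (xbar k)).sub (hL2 s k)
    exact h2.const_mul _
  have hprodint : ∀ (s s' : ℕ) (i j : Fin d),
      Integrable (fun ω => H.mulVec (xbar - ξ s ω) i * H.mulVec (xbar - ξ s' ω) j) μ :=
    fun s s' i j => meka_l2_integrable_mul (hη2 s i) (hη2 s' j)
  -- the mean of each coordinate of ξ
  have hmeanξ : ∀ (s : ℕ) (k : Fin d), ∫ ω, ξ s ω k ∂μ = xbar k := by
    intro s k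
    have h1 : ∫ ω, ξ s ω k ∂μ = ∫ x, x k ∂(Measure.map (ξ s) μ) :=
      (integral_map (hmeas s).aemeasurable
        (measurable_pi_apply k).aestronglyMeasurable).symm
    have h2 : ∫ x, x k ∂(Measure.map (ξ 0) μ) = ∫ ω, ξ 0 ω k ∂μ :=
      integral_map (hmeas 0).aemeasurable (measurable_pi_apply k).aestronglyMeasurable
    rw [h1, hident s, h2, hxbar]
  -- the noises are centered
  have hmean : ∀ (s : ℕ) (i : Fin d), ∫ ω, H.mulVec (xbar - ξ s ω) i ∂μ = 0 := by
    intro s i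
    have hr : (fun ω => H.mulVec (xbar - ξ s ω) i)
        = fun ω => ∑ k, H i k * (xbar k - ξ s ω k) := funext fun ω => hφrw i _
    have hintk : ∀ k : Fin d, Integrable (fun ω => H i k * (xbar k - ξ s ω k)) μ := by
      intro k
      have h2 : MemLp (fun ω => H i k * (xbar k - ξ s ω k)) 2 μ := by
        have h3 : MemLp (fun ω => xbar k - ξ s ω k) 2 μ := (memLp_const (xbar k)).sub (hL2 s k)
        exact h3.const_mul _
      exact h2.integrable one_le_two
    rw [hr, integral_finset_sum _ fun k _ => hintk k]
    refine Finset.sum_eq_zero fun k _ => ?_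
    rw [integral_const_mul, integral_sub (integrable_const _) ((hL2 s k).integrable one_le_two),
      integral_const, hmeanξ s k]
    simp
  -- second moments of the noises : their covariance is S
  have hsecond : ∀ (s : ℕ) (i j : Fin d),
      ∫ ω, H.mulVec (xbar - ξ s ω) i * H.mulVec (xbar - ξ s ω) j ∂μ = S i j := by
    intro s i j
    have key : ∀ u : ℕ, ∫ ω, H.mulVec (xbar - ξ u ω) i * H.mulVec (xbar - ξ u ω) j ∂μ
        = ∫ x, H.mulVec (xbar - x) i * H.mulVec (xbar - x) j ∂(Measure.map (ξ u) μ) := by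
      intro u
      exact (integral_map (hmeas u).aemeasurable
        (((hφmeas i).mul (hφmeas j)).aestronglyMeasurable)).symm
    rw [key s, hident s, ← key 0]
    have expand : ∀ ω, H.mulVec (xbar - ξ 0 ω) i * H.mulVec (xbar - ξ 0 ω) j
        = ∑ k, ∑ l, H i k * H j l * ((ξ 0 ω k - xbar k) * (ξ 0 ω l - xbar l)) := by
      intro ω
      rw [hφrw i, hφrw j, Finset.sum_mul_sum]
      exact Finset.sum_congr rfl fun k _ => Finset.sum_congr rfl fun l _ => by ring
    have hint : ∀ (k l : Fin d),
        Integrable (fun ω => H i k * H j l * ((ξ 0 ω k - xbar k) * (ξ 0 ω l - xbar l))) μ :=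
      fun k l => (meka_l2_integrable_mul ((hL2 0 k).sub (memLp_const (xbar k)))
        ((hL2 0 l).sub (memLp_const (xbar l)))).const_mul _
    simp_rw [expand]
    rw [integral_finset_sum _ fun k _ => integrable_finset_sum _ fun l _ => hint k l]
    have : ∀ k, ∫ ω, ∑ l, H i k * H j l * ((ξ 0 ω k - xbar k) * (ξ 0 ω l - xbar l)) ∂μ
        = ∑ l, H i k * H j l * C k l := by
      intro k
      rw [integral_finset_sum _ fun l _ => hint k l]
      refine Finset.sum_congr rfl fun l _ => ?_
      rw [integral_const_mul, ← hC k l]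
    simp_rw [this]
    rw [hS]
    simp only [Matrix.mul_apply, Matrix.transpose_apply, Finset.sum_mul]
    rw [Finset.sum_comm]
    exact Finset.sum_congr rfl fun l _ => Finset.sum_congr rfl fun k _ => by ring
  -- cross moments vanish by independence
  have hcross : ∀ (s s' : ℕ), s ≠ s' → ∀ i j : Fin d,
      ∫ ω, H.mulVec (xbar - ξ s ω) i * H.mulVec (xbar - ξ s' ω) j ∂μ = 0 := by
    intro s s' hne i j
    have hind : IndepFun (fun ω => H.mulVec (xbar - ξ s ω) i)
        (fun ω => H.mulVec (xbar - ξ s' ω) j) μ :=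
      (hindep.indepFun hne).comp (hφmeas i) (hφmeas j)
    have h := hind.integral_mul_eq_mul_integral ((hη2 s i).integrable one_le_two).aestronglyMeasurable
      ((hη2 s' j).integrable one_le_two).aestronglyMeasurable
    have hre : (fun ω => H.mulVec (xbar - ξ s ω) i) * (fun ω => H.mulVec (xbar - ξ s' ω) j)
        = fun ω => H.mulVec (xbar - ξ s ω) i * H.mulVec (xbar - ξ s' ω) j := rfl
    rw [hre] at h
    rw [h, hmean s i, hmean s' j, mul_zero]
  -- main assembly
  intro t
  have hc : ((t : ℝ) + 1) ≠ 0 := by positivity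
  have heci : ∀ (ω : Ω) (i : Fin d), m t ω i - H.mulVec (θ t ω - xbar) i
      = ((t : ℝ) + 1)⁻¹ * ∑ s ∈ Finset.range (t + 1), H.mulVec (xbar - ξ s ω) i := by
    intro ω i
    have h := congrFun (he t ω) i
    simpa [Finset.sum_apply] using h
  have part1 : ∀ i j : Fin d, ∫ ω, (m t ω i - H.mulVec (θ t ω - xbar) i) *
      (m t ω j - H.mulVec (θ t ω - xbar) j) ∂μ = P t i j := by
    intro i j
    have hrw : ∀ ω : Ω, (m t ω i - H.mulVec (θ t ω - xbar) i) *
        (m t ω j - H.mulVec (θ t ω - xbar) j)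
        = (((t : ℝ) + 1)⁻¹ * ((t : ℝ) + 1)⁻¹) * ∑ s ∈ Finset.range (t + 1),
            ∑ s' ∈ Finset.range (t + 1),
              H.mulVec (xbar - ξ s ω) i * H.mulVec (xbar - ξ s' ω) j := by
      intro ω
      rw [heci ω i, heci ω j, mul_mul_mul_comm, Finset.sum_mul_sum]
    simp_rw [hrw]
    rw [integral_const_mul, integral_finset_sum _ fun s _ =>
      integrable_finset_sum _ fun s' _ => hprodint s s' i j]
    have hinner : ∀ s ∈ Finset.range (t + 1),
        ∫ ω, ∑ s' ∈ Finset.range (t + 1),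
          H.mulVec (xbar - ξ s ω) i * H.mulVec (xbar - ξ s' ω) j ∂μ = S i j := by
      intro s hs
      rw [integral_finset_sum _ fun s' _ => hprodint s s' i j]
      rw [Finset.sum_eq_single s (fun s' _ hne => hcross s s' (fun h => hne h.symm) i j)
        (fun h => absurd hs h)]
      exact hsecond s i j
    rw [Finset.sum_congr rfl hinner, Finset.sum_const, Finset.card_range, nsmul_eq_mul,
      hPformula t]
    simp only [Matrix.smul_apply, smul_eq_mul]
    push_cast
    field_simp
  refine ⟨part1, hPformula t, ?_⟩
  have he2 : ∀ i : Fin d, MemLp (fun ω => m t ω i - H.mulVec (θ t ω - xbar) i) 2 μ := by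
    intro i
    have hr : (fun ω => m t ω i - H.mulVec (θ t ω - xbar) i)
        = fun ω => ((t : ℝ) + 1)⁻¹ * ∑ s ∈ Finset.range (t + 1), H.mulVec (xbar - ξ s ω) i :=
      funext fun ω => heci ω i
    rw [hr]
    have h2 : MemLp (fun ω => ∑ s ∈ Finset.range (t + 1), H.mulVec (xbar - ξ s ω) i) 2 μ :=
      memLp_finset_sum _ fun s _ => hη2 s i
    exact h2.const_mul _
  rw [integral_finset_sum _ fun i _ => (he2 i).integrable_sq]
  have hsq : ∀ i : Fin d, ∫ ω, (m t ω i - H.mulVec (θ t ω - xbar) i) ^ 2 ∂μ = P t i i := by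
    intro i
    rw [← part1 i i]
    exact integral_congr_ae (ae_of_all _ fun ω => by ring)
  rw [Finset.sum_congr rfl fun i _ => hsq i, hPformula t]
  have : ∑ i, (((t : ℝ) + 1)⁻¹ • S) i i = (((t : ℝ) + 1)⁻¹ • S).trace := rfl
  rw [this, Matrix.trace_smul, smul_eq_mul]
end

section
/- (Proposition 1.) Consider the noisy quadratic problem $f(\theta,\xi) = \tfrac{1}{2}(\theta-\xi)^T H (\theta - \xi)$ where $H$ is symmetric with $\mu I \preceq H \preceq L I$ for some $0 < \mu \leq L$, and $\xi_0, \xi_1, \dots$ are i.i.d. square-integrable $\mathbb{R}^d$-valued random vectors with mean $\bar\xi$ and covariance $C$ such that $\Sigma := H C H^T$ is positive definite. Define $g_t = H(\theta_t - \xi_t)$, initialize $m_0 = g_0$, $P_0 = \Sigma$, and for $t \geq 1$ update $K_t = P_{t-1}(P_{t-1}+\Sigma)^{-1}$, $m_t = (I-K_t)(m_{t-1} + H(\theta_t - \theta_{t-1})) + K_t g_t$, $P_t = (I-K_t)P_{t-1}$, with parameter updates $\theta_{t+1} = \theta_t - \alpha m_t$ for a constant step size $0 < \alpha \leq 1/L$.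 Let $f(\theta) = \mathbb{E}_\xi[\tfrac12(\theta-\xi)^TH(\theta-\xi)]$ and $f_\ast = \inf_\theta f(\theta)$. Then $\mathbb{E}[f(\theta_t) - f_\ast] \in O(1/t)$: there exists $M > 0$ with $\mathbb{E}[f(\theta_t) - f_\ast] \leq M/t$ for all $t \geq 1$. -/
open MeasureTheory Matrix ProbabilityTheory

namespace MekaAux
variable {d : ℕ}

lemma dot_self_nonneg (v : Fin d → ℝ) : 0 ≤ v ⬝ᵥ v :=
  Finset.sum_nonneg fun _ _ => mul_self_nonneg _

lemma psd_dot {B : Matrix (Fin d) (Fin d) ℝ} (hB : B.PosSemidef) (v : Fin d → ℝ) :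
    0 ≤ v ⬝ᵥ B.mulVec v := by simpa using hB.dotProduct_mulVec_nonneg v

lemma psd_of_symm {B : Matrix (Fin d) (Fin d) ℝ} (hs : Bᵀ = B)
    (h : ∀ v, 0 ≤ v ⬝ᵥ B.mulVec v) : B.PosSemidef := by
  refine PosSemidef.of_dotProduct_mulVec_nonneg ?_ fun x => by simpa using h x
  rwa [Matrix.IsHermitian, conjTranspose_eq_transpose_of_trivial]

lemma dot_mulVec_left (M : Matrix (Fin d) (Fin d) ℝ) (x y : Fin d → ℝ) :
    (M.mulVec x) ⬝ᵥ y = x ⬝ᵥ (Mᵀ.mulVec y) := by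
  simp only [dotProduct, mulVec, dotProduct, transpose_apply, Finset.sum_mul,
    Finset.mul_sum]
  rw [Finset.sum_comm]
  exact Finset.sum_congr rfl fun i _ => Finset.sum_congr rfl fun j _ => by ring

lemma quad_le {B : Matrix (Fin d) (Fin d) ℝ} {c : ℝ}
    (h : (c • (1 : Matrix (Fin d) (Fin d) ℝ) - B).PosSemidef) (v : Fin d → ℝ) :
    v ⬝ᵥ B.mulVec v ≤ c * (v ⬝ᵥ v) := by
  have := psd_dot h v
  simp only [sub_mulVec, smul_mulVec, one_mulVec, dotProduct_sub,
    dotProduct_smul, smul_eq_mul] at this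
  linarith

lemma transpose_eq {B : Matrix (Fin d) (Fin d) ℝ} (hB : B.PosSemidef) : Bᵀ = B := by
  have := hB.1; rwa [Matrix.IsHermitian, conjTranspose_eq_transpose_of_trivial] at this

open scoped MatrixOrder in
lemma op_bound {B : Matrix (Fin d) (Fin d) ℝ} (hB : B.PosSemidef) {c : ℝ} (hc : 0 ≤ c)
    (h : (c • (1 : Matrix (Fin d) (Fin d) ℝ) - B).PosSemidef) (v : Fin d → ℝ) :
    (B.mulVec v) ⬝ᵥ (B.mulVec v) ≤ c ^ 2 * (v ⬝ᵥ v) := by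
  classical
  set R := CFC.sqrt B with hRdef
  have hRR : R * R = B := CFC.sqrt_mul_sqrt_self B hB.nonneg
  have hRt : Rᵀ = R := transpose_eq (CFC.sqrt_nonneg B).posSemidef
  have hBt : Bᵀ = B := transpose_eq hB
  have key1 : (B.mulVec v) ⬝ᵥ (B.mulVec v) = (R.mulVec v) ⬝ᵥ B.mulVec (R.mulVec v) := by
    rw [dot_mulVec_left B v (B.mulVec v), hBt, dot_mulVec_left R v (B.mulVec (R.mulVec v)),
      hRt]
    rw [mulVec_mulVec, mulVec_mulVec, mulVec_mulVec, ← hRR]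
    rw [show R * R * (R * R) = R * (R * R) * R by noncomm_ring]
  have key3 : (R.mulVec v) ⬝ᵥ (R.mulVec v) = v ⬝ᵥ B.mulVec v := by
    rw [dot_mulVec_left R v (R.mulVec v), hRt, mulVec_mulVec, hRR]
  have key2 : (R.mulVec v) ⬝ᵥ B.mulVec (R.mulVec v) ≤ c * ((R.mulVec v) ⬝ᵥ (R.mulVec v)) :=
    quad_le h _
  have key4 : v ⬝ᵥ B.mulVec v ≤ c * (v ⬝ᵥ v) := quad_le h v
  calc (B.mulVec v) ⬝ᵥ (B.mulVec v) = (R.mulVec v) ⬝ᵥ B.mulVec (R.mulVec v) := key1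
    _ ≤ c * ((R.mulVec v) ⬝ᵥ (R.mulVec v)) := key2
    _ = c * (v ⬝ᵥ B.mulVec v) := by rw [key3]
    _ ≤ c * (c * (v ⬝ᵥ v)) := mul_le_mul_of_nonneg_left key4 hc
    _ = c ^ 2 * (v ⬝ᵥ v) := by ring

noncomputable def nrm (v : Fin d → ℝ) : ℝ := Real.sqrt (v ⬝ᵥ v)

lemma nrm_nonneg (v : Fin d → ℝ) : 0 ≤ nrm v := Real.sqrt_nonneg _

lemma nrm_sq (v : Fin d → ℝ) : nrm v ^ 2 = v ⬝ᵥ v := Real.sq_sqrt (dot_self_nonneg v)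

lemma nrm_eq_norm (v : Fin d → ℝ) :
    nrm v = ‖(WithLp.equiv 2 (Fin d → ℝ)).symm v‖ := by
  rw [EuclideanSpace.norm_eq, nrm]
  congr 1
  simp [dotProduct, Real.norm_eq_abs, sq_abs, sq]

lemma nrm_add_le (v w : Fin d → ℝ) : nrm (v + w) ≤ nrm v + nrm w := by
  simp only [nrm_eq_norm]
  rw [show (WithLp.equiv 2 (Fin d → ℝ)).symm (v + w)
      = (WithLp.equiv 2 (Fin d → ℝ)).symm v + (WithLp.equiv 2 (Fin d → ℝ)).symm w from rfl]
  exact norm_add_le _ _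

lemma nrm_smul (c : ℝ) (v : Fin d → ℝ) : nrm (c • v) = |c| * nrm v := by
  simp only [nrm_eq_norm]
  rw [show (WithLp.equiv 2 (Fin d → ℝ)).symm (c • v)
      = c • (WithLp.equiv 2 (Fin d → ℝ)).symm v from rfl]
  rw [norm_smul, Real.norm_eq_abs]

lemma nrm_mulVec_le {B : Matrix (Fin d) (Fin d) ℝ} (hB : B.PosSemidef) {c : ℝ} (hc : 0 ≤ c)
    (h : (c • (1 : Matrix (Fin d) (Fin d) ℝ) - B).PosSemidef) (v : Fin d → ℝ) :
    nrm (B.mulVec v) ≤ c * nrm v := by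
  have h2 : nrm (B.mulVec v) ^ 2 ≤ (c * nrm v) ^ 2 := by
    rw [nrm_sq, mul_pow, nrm_sq]; exact op_bound hB hc h v
  have h3 := Real.sqrt_le_sqrt h2
  rwa [Real.sqrt_sq (nrm_nonneg _), Real.sqrt_sq (mul_nonneg hc (nrm_nonneg v))] at h3

lemma integrable_mul_of_memL2 {Ω : Type*} [MeasurableSpace Ω] {μ : Measure Ω} {f g : Ω → ℝ}
    (hf : MemLp f 2 μ) (hg : MemLp g 2 μ) : Integrable (fun ω => f ω * g ω) μ := by
  have h : (fun ω => f ω * g ω) = fun ω => (((f ω + g ω) ^ 2 - f ω ^ 2) - g ω ^ 2) * (1 / 2) := by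
    funext ω; ring
  rw [h]
  exact (((hf.add hg).integrable_sq.sub hf.integrable_sq).sub hg.integrable_sq).mul_const _

lemma sum_geom_le {r : ℝ} (h0 : 0 ≤ r) (h1 : r < 1) (t : ℕ) :
    ∑ j ∈ Finset.range t, r ^ j ≤ (1 - r)⁻¹ := by
  have := Summable.sum_le_tsum (Finset.range t) (fun i _ => pow_nonneg h0 i)
    (summable_geometric_of_lt_one h0 h1)
  rwa [tsum_geometric_of_lt_one h0 h1] at this

lemma sum_mul_geom_le {r : ℝ} (h0 : 0 ≤ r) (h1 : r < 1) (t : ℕ) :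
    ∑ j ∈ Finset.range t, ((j : ℝ) + 1) * r ^ j ≤ ((1 - r)⁻¹) ^ 2 := by
  have hs : Summable (fun n : ℕ => (n : ℝ) * r ^ n) := by
    have := summable_pow_mul_geometric_of_norm_lt_one 1
      (by rwa [Real.norm_eq_abs, abs_of_nonneg h0] : ‖r‖ < 1)
    simpa using this
  have h1' : ∑ j ∈ Finset.range t, ((j : ℝ)) * r ^ j ≤ r / (1 - r) ^ 2 := by
    have := Summable.sum_le_tsum (Finset.range t)
      (fun i _ => mul_nonneg (Nat.cast_nonneg i) (pow_nonneg h0 i)) hs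
    rwa [tsum_coe_mul_geometric_of_norm_lt_one
      (by rwa [Real.norm_eq_abs, abs_of_nonneg h0])] at this
  have h2' : ∑ j ∈ Finset.range t, r ^ j ≤ (1 - r)⁻¹ := sum_geom_le h0 h1 t
  have hr : 0 < 1 - r := by linarith
  have hspl : ∑ j ∈ Finset.range t, ((j : ℝ) + 1) * r ^ j
      = (∑ j ∈ Finset.range t, ((j : ℝ)) * r ^ j) + ∑ j ∈ Finset.range t, r ^ j := by
    rw [← Finset.sum_add_distrib]; exact Finset.sum_congr rfl fun j _ => by ring
  rw [hspl]
  have : r / (1 - r) ^ 2 + (1 - r)⁻¹ = ((1 - r)⁻¹) ^ 2 := by field_simp; ring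
  linarith

lemma single_mul_geom_le {r : ℝ} (h0 : 0 ≤ r) (h1 : r < 1) (t : ℕ) :
    ((t : ℝ) + 1) * r ^ t ≤ ((1 - r)⁻¹) ^ 2 := by
  have h := sum_mul_geom_le h0 h1 (t + 1)
  have h2 := Finset.single_le_sum (f := fun j : ℕ => ((j : ℝ) + 1) * r ^ j)
    (fun j _ => mul_nonneg (by positivity) (pow_nonneg h0 j))
    (Finset.self_mem_range_succ t)
  linarith

lemma conv_sum_le {r : ℝ} (h0 : 0 ≤ r) (h1 : r < 1) {t : ℕ} (ht : 1 ≤ t) :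
    ∑ s ∈ Finset.range t, r ^ (t - 1 - s) * ((s : ℝ) + 1)⁻¹ ≤ ((1 - r)⁻¹) ^ 2 / t := by
  have ht0 : (0 : ℝ) < t := by exact_mod_cast ht
  have step : ∀ s ∈ Finset.range t,
      r ^ (t - 1 - s) * ((s : ℝ) + 1)⁻¹
        ≤ (((t - 1 - s : ℕ) : ℝ) + 1) * r ^ (t - 1 - s) / t := by
    intro s hs
    rw [Finset.mem_range] at hs
    have h1s : (0 : ℝ) < (s : ℝ) + 1 := by positivity
    have hnat : t ≤ (t - s) * (s + 1) := by
      have ha : 1 ≤ t - s := by omega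
      have hb : s ≤ (t - s) * s := Nat.le_mul_of_pos_left s (by omega)
      have hc : (t - s) * (s + 1) = (t - s) * s + (t - s) := by ring
      omega
    have hcast : (((t - 1 - s : ℕ) : ℝ) + 1) = ((t - s : ℕ) : ℝ) := by
      have h4 : t - 1 - s + 1 = t - s := by omega
      rw [← h4]; push_cast; ring
    have hBA : (t : ℝ) ≤ ((((t - 1 - s : ℕ) : ℝ)) + 1) * ((s : ℝ) + 1) := by
      rw [hcast]
      have hcl : ((t : ℕ) : ℝ) ≤ (((t - s) * (s + 1) : ℕ) : ℝ) := Nat.cast_le.mpr hnat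
      push_cast at hcl
      linarith
    have hX : 0 ≤ r ^ (t - 1 - s) := pow_nonneg h0 _
    rw [← div_eq_mul_inv, div_le_div_iff₀ h1s ht0]
    nlinarith [mul_le_mul_of_nonneg_left hBA hX]
  calc ∑ s ∈ Finset.range t, r ^ (t - 1 - s) * ((s : ℝ) + 1)⁻¹
      ≤ ∑ s ∈ Finset.range t, (((t - 1 - s : ℕ) : ℝ) + 1) * r ^ (t - 1 - s) / t :=
        Finset.sum_le_sum step
    _ = (∑ j ∈ Finset.range t, ((j : ℝ) + 1) * r ^ j) / t := by
        rw [← Finset.sum_div]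
        congr 1
        exact Finset.sum_range_reflect (fun j => ((j : ℝ) + 1) * r ^ j) t
    _ ≤ ((1 - r)⁻¹) ^ 2 / t := by
        gcongr
        exact sum_mul_geom_le h0 h1 t

end MekaAux

open MekaAux
set_option maxHeartbeats 2000000 in
/-- Proposition 1: for the noisy quadratic problem `f(θ, ξ) = ½ (θ-ξ)ᵀ H (θ-ξ)` with
`μI ⪯ H ⪯ LI`, i.i.d. square-integrable locations `ξ t` and positive definite noise
covariance `Σ = H C Hᵀ`, the iterates `θ (t+1) = θ t - α • m t` with constant step size
`0 < α ≤ 1/L` and Kalman-filtered gradients `m t` satisfy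
`𝔼[f(θ t) - f⋆] ≤ M / t` for some `M > 0` and all `t ≥ 1`, i.e. `O(1/t)` convergence. -/
theorem meka_noisy_quadratic_convergence
    {d : ℕ} (H : Matrix (Fin d) (Fin d) ℝ) (hH : H.IsSymm)
    (mu L : ℝ) (hmu : 0 < mu) (hmuL : mu ≤ L)
    (hHlb : (H - mu • (1 : Matrix (Fin d) (Fin d) ℝ)).PosSemidef)
    (hHub : ((L • (1 : Matrix (Fin d) (Fin d) ℝ)) - H).PosSemidef)
    {Ω : Type*} [MeasurableSpace Ω] (μ : Measure Ω) [IsProbabilityMeasure μ]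
    (ξ : ℕ → Ω → Fin d → ℝ) (hmeas : ∀ t, Measurable (ξ t))
    (hindep : iIndepFun ξ μ)
    (hident : ∀ t, Measure.map (ξ t) μ = Measure.map (ξ 0) μ)
    (hL2 : ∀ t i, MemLp (fun ω => ξ t ω i) 2 μ)
    (xbar : Fin d → ℝ) (hxbar : ∀ i, xbar i = ∫ ω, ξ 0 ω i ∂μ)
    (C : Matrix (Fin d) (Fin d) ℝ)
    (hC : ∀ i j, C i j = ∫ ω, (ξ 0 ω i - xbar i) * (ξ 0 ω j - xbar j) ∂μ)
    (S : Matrix (Fin d) (Fin d) ℝ) (hS : S = H * C * Hᵀ) (hSpd : S.PosDef)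
    -- iterates, stochastic gradients, and the filter recursion
    (α : ℝ) (hα0 : 0 < α) (hα : α ≤ 1 / L)
    (θ : ℕ → Ω → Fin d → ℝ) (θ₀ : Fin d → ℝ) (hθ0 : ∀ ω, θ 0 ω = θ₀)
    (g : ℕ → Ω → Fin d → ℝ) (hg : ∀ t ω, g t ω = H.mulVec (θ t ω - ξ t ω))
    (m : ℕ → Ω → Fin d → ℝ) (P K : ℕ → Matrix (Fin d) (Fin d) ℝ)
    (hm0 : ∀ ω, m 0 ω = g 0 ω) (hP0 : P 0 = S)
    (hK : ∀ t : ℕ, K (t + 1) = P t * (P t + S)⁻¹)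
    (hm : ∀ (t : ℕ) ω, m (t + 1) ω =
      (1 - K (t + 1)).mulVec (m t ω + H.mulVec (θ (t + 1) ω - θ t ω)) +
        (K (t + 1)).mulVec (g (t + 1) ω))
    (hP : ∀ t : ℕ, P (t + 1) = (1 - K (t + 1)) * P t)
    (hθ : ∀ (t : ℕ) ω, θ (t + 1) ω = θ t ω - α • m t ω)
    -- the full objective and its infimum
    (F : (Fin d → ℝ) → ℝ)
    (hF : ∀ v, F v = ∫ ω, (1 / 2 : ℝ) * ((v - ξ 0 ω) ⬝ᵥ H.mulVec (v - ξ 0 ω)) ∂μ)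
    (fstar : ℝ) (hfstar : fstar = ⨅ v : Fin d → ℝ, F v) :
    ∃ M : ℝ, 0 < M ∧ ∀ t : ℕ, 1 ≤ t →
      (∫ ω, F (θ t ω) ∂μ) - fstar ≤ M / (t : ℝ) := by
  classical
  -- scalars
  have hL0 : 0 < L := lt_of_lt_of_le hmu hmuL
  have hαL : α * L ≤ 1 := by
    rw [div_eq_mul_inv, one_mul] at hα
    calc α * L ≤ L⁻¹ * L := by gcongr
      _ = 1 := inv_mul_cancel₀ hL0.ne'
  have hαmu1 : α * mu ≤ 1 := le_trans (by nlinarith) hαL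
  set ρ : ℝ := 1 - α * mu with hρdef
  set r : ℝ := max ρ (1 / 2) with hrdef
  have hρ0 : 0 ≤ ρ := by simp only [hρdef]; linarith
  have hr0 : (0 : ℝ) ≤ r := le_trans (by norm_num) (le_max_right _ _)
  have hρr : ρ ≤ r := le_max_left _ _
  have hr1 : r < 1 := max_lt (by nlinarith) (by norm_num)
  have hr1' : (0:ℝ) < 1 - r := by linarith
  -- matrices
  set A : Matrix (Fin d) (Fin d) ℝ := 1 - α • H with hAdef
  have hlb' : ∀ v : Fin d → ℝ, mu * (v ⬝ᵥ v) ≤ v ⬝ᵥ H.mulVec v := by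
    intro v
    have := psd_dot hHlb v
    simp only [sub_mulVec, smul_mulVec, one_mulVec, dotProduct_sub,
      dotProduct_smul, smul_eq_mul] at this
    linarith
  have hquadH : ∀ v : Fin d → ℝ, v ⬝ᵥ H.mulVec v ≤ L * (v ⬝ᵥ v) := fun v => quad_le hHub v
  have hHt : Hᵀ = H := hH
  have hHpsd : H.PosSemidef := by
    refine psd_of_symm hHt fun v => ?_
    have := hlb' v
    have := dot_self_nonneg v
    nlinarith
  have hApsd : A.PosSemidef := by
    refine psd_of_symm ?_ fun v => ?_
    · simp [hAdef, transpose_smul, hHt]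
    · simp only [hAdef, sub_mulVec, one_mulVec, smul_mulVec, dotProduct_sub,
        dotProduct_smul, smul_eq_mul]
      have h1 := hquadH v
      have h2 := dot_self_nonneg v
      nlinarith
  have hYpsd : (ρ • (1 : Matrix (Fin d) (Fin d) ℝ) - A).PosSemidef := by
    refine psd_of_symm ?_ fun v => ?_
    · simp [hAdef, transpose_smul, hHt, transpose_sub]
    · simp only [hAdef, hρdef, sub_mulVec, one_mulVec, smul_mulVec, dotProduct_sub,
        dotProduct_smul, smul_eq_mul]
      have h1 := hlb' v
      nlinarith
  have hYpsd' : (r • (1 : Matrix (Fin d) (Fin d) ℝ) - A).PosSemidef := by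
    refine psd_of_symm ?_ fun v => ?_
    · simp [hAdef, transpose_smul, hHt, transpose_sub]
    · simp only [hAdef, sub_mulVec, one_mulVec, smul_mulVec, dotProduct_sub,
        dotProduct_smul, smul_eq_mul]
      have h1 := hlb' v
      have h2 := dot_self_nonneg v
      have h3 : (1 : ℝ) - α * mu ≤ r := hρr
      nlinarith [mul_le_mul_of_nonneg_right h3 h2]
  have hnormH : ∀ v, nrm (H.mulVec v) ≤ L * nrm v :=
    fun v => nrm_mulVec_le hHpsd hL0.le hHub v
  have hnormA : ∀ v, nrm (A.mulVec v) ≤ r * nrm v :=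
    fun v => nrm_mulVec_le hApsd hr0 hYpsd' v
  -- Kalman gain closed form
  have hSdet : IsUnit S.det := hSpd.det_pos.ne'.isUnit
  have hSS : S * S⁻¹ = 1 := mul_nonsing_inv S hSdet
  have hsmul_inv : ∀ c : ℝ, c ≠ 0 → (c • S)⁻¹ = c⁻¹ • S⁻¹ := by
    intro c hc
    apply inv_eq_right_inv
    rw [smul_mul_assoc, mul_smul_comm, hSS, smul_smul, mul_inv_cancel₀ hc, one_smul]
  have hPt : ∀ t : ℕ, P t = ((t : ℝ) + 1)⁻¹ • S := by
    intro t; induction t with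
    | zero => simpa using hP0
    | succ n ih =>
      have hc1 : ((n : ℝ) + 1) ≠ 0 := by positivity
      have hc2 : ((n : ℝ) + 2) ≠ 0 := by positivity
      have hsum : P n + S = (((n : ℝ) + 2) * ((n : ℝ) + 1)⁻¹) • S := by
        rw [ih, show (((n:ℝ)+1)⁻¹) • S + S = (((n:ℝ)+1)⁻¹ + 1) • S by
          rw [add_smul, one_smul]]
        congr 1; field_simp; ring
      have hKn : K (n + 1) = ((n : ℝ) + 2)⁻¹ • 1 := by
        rw [hK n, hsum, hsmul_inv _ (by positivity), ih, smul_mul_assoc, mul_smul_comm,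
          smul_smul, hSS]
        congr 1
        rw [mul_inv, inv_inv]
        field_simp
        try ring
      rw [hP n, hKn, ih]
      rw [sub_mul, one_mul, smul_mul_assoc, one_mul, smul_smul]
      rw [← sub_smul]
      congr 1
      push_cast
      field_simp
      ring
  have hKt : ∀ n : ℕ, K (n + 1) = ((n : ℝ) + 2)⁻¹ • 1 := by
    intro n
    have hc1 : ((n : ℝ) + 1) ≠ 0 := by positivity
    have hc2 : ((n : ℝ) + 2) ≠ 0 := by positivity
    have hsum : P n + S = (((n : ℝ) + 2) * ((n : ℝ) + 1)⁻¹) • S := by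
      rw [hPt n, show (((n:ℝ)+1)⁻¹) • S + S = (((n:ℝ)+1)⁻¹ + 1) • S by
        rw [add_smul, one_smul]]
      congr 1; field_simp; ring
    rw [hK n, hsum, hsmul_inv _ (by positivity), hPt n, smul_mul_assoc, mul_smul_comm,
      smul_smul, hSS]
    congr 1
    rw [mul_inv, inv_inv]
    field_simp
    try ring
  -- closed form for m
  set avg : ℕ → Ω → Fin d → ℝ :=
    fun t ω => ((t : ℝ) + 1)⁻¹ • ∑ a ∈ Finset.range (t + 1), ξ a ω with havg
  have hmt : ∀ t ω, m t ω = H.mulVec (θ t ω - avg t ω) := by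
    intro t; induction t with
    | zero =>
      intro ω
      rw [hm0, hg]
      congr 2
      simp [havg]
    | succ n ih =>
      intro ω
      have hc1 : ((n : ℝ) + 1) ≠ 0 := by positivity
      have hc2 : ((n : ℝ) + 2) ≠ 0 := by positivity
      have hk : K (n + 1) = (((n : ℝ) + 2)⁻¹) • 1 := hKt n
      have h1k : (1 - K (n + 1))
          = (1 - ((n : ℝ) + 2)⁻¹) • (1 : Matrix (Fin d) (Fin d) ℝ) := by
        rw [hk, sub_smul, one_smul]
      have hAvgRec : avg (n + 1) ω
          = (1 - ((n : ℝ) + 2)⁻¹) • avg n ω + ((n : ℝ) + 2)⁻¹ • ξ (n + 1) ω := by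
        simp only [havg]
        rw [Finset.sum_range_succ, smul_add, smul_smul]
        rw [show (1 - ((n : ℝ) + 2)⁻¹) * (((n : ℝ)) + 1)⁻¹ = ((n : ℝ) + 2)⁻¹ by
          field_simp; ring]
        rw [show (((n + 1 : ℕ) : ℝ) + 1) = ((n : ℝ) + 2) by push_cast; ring]
      rw [hm n ω, h1k, hk, hg, ih ω]
      simp only [smul_mulVec, one_mulVec]
      rw [hAvgRec]
      rw [show H.mulVec (θ n ω - avg n ω) + H.mulVec (θ (n + 1) ω - θ n ω)
          = H.mulVec (θ (n + 1) ω - avg n ω) by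
        rw [← mulVec_add]; exact congrArg H.mulVec (by abel)]
      rw [← mulVec_smul, ← mulVec_smul, ← mulVec_add]
      exact congrArg H.mulVec (by module)
  -- error vectors
  set e : ℕ → Ω → Fin d → ℝ := fun t ω => θ t ω - xbar with he
  set dd : ℕ → Ω → Fin d → ℝ := fun t ω => avg t ω - xbar with hdd
  have heRec : ∀ t ω, e (t + 1) ω = A.mulVec (e t ω) + α • (H.mulVec (dd t ω)) := by
    intro t ω
    simp only [he, hdd]
    rw [hθ t ω, hmt t ω, hAdef]
    simp only [Matrix.mulVec_sub, Matrix.sub_mulVec, Matrix.one_mulVec,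
      Matrix.smul_mulVec]
    module
  set E0 : ℝ := nrm (θ₀ - xbar) ^ 2 with hE0
  have he0 : ∀ ω, e 0 ω = θ₀ - xbar := fun ω => by simp only [he]; rw [hθ0]
  have hNbound : ∀ t ω, nrm (e t ω) ≤ r ^ t * nrm (θ₀ - xbar)
      + ∑ s ∈ Finset.range t, r ^ (t - 1 - s) * (α * L * nrm (dd s ω)) := by
    intro t; induction t with
    | zero => intro ω; rw [he0 ω]; simp
    | succ n ih =>
      intro ω
      have h1 : nrm (e (n + 1) ω) ≤ r * nrm (e n ω) + α * L * nrm (dd n ω) := by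
        rw [heRec n ω]
        refine (nrm_add_le _ _).trans (add_le_add (hnormA _) ?_)
        rw [nrm_smul, abs_of_pos hα0, mul_assoc]
        exact mul_le_mul_of_nonneg_left (hnormH _) hα0.le
      have h2 : r * nrm (e n ω) ≤ r * (r ^ n * nrm (θ₀ - xbar)
          + ∑ s ∈ Finset.range n, r ^ (n - 1 - s) * (α * L * nrm (dd s ω))) :=
        mul_le_mul_of_nonneg_left (ih ω) hr0
      have h3 : r * (r ^ n * nrm (θ₀ - xbar)
            + ∑ s ∈ Finset.range n, r ^ (n - 1 - s) * (α * L * nrm (dd s ω)))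
          + α * L * nrm (dd n ω)
          = r ^ (n + 1) * nrm (θ₀ - xbar)
            + ∑ s ∈ Finset.range (n + 1), r ^ (n - s) * (α * L * nrm (dd s ω)) := by
        rw [Finset.sum_range_succ, mul_add, Finset.mul_sum]
        have hs : ∀ s ∈ Finset.range n,
            r * (r ^ (n - 1 - s) * (α * L * nrm (dd s ω)))
              = r ^ (n - s) * (α * L * nrm (dd s ω)) := by
          intro s hs
          rw [Finset.mem_range] at hs
          rw [← mul_assoc, ← pow_succ']
          congr 2
          omega
        rw [Finset.sum_congr rfl hs, Nat.sub_self, pow_zero, one_mul, pow_succ]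
        ring
      have h4 : ∀ s ∈ Finset.range (n + 1), r ^ (n - s) * (α * L * nrm (dd s ω))
          = r ^ (n + 1 - 1 - s) * (α * L * nrm (dd s ω)) := by
        intro s hs
        have : n + 1 - 1 - s = n - s := by omega
        rw [this]
      calc nrm (e (n + 1) ω) ≤ r * nrm (e n ω) + α * L * nrm (dd n ω) := h1
        _ ≤ r * (r ^ n * nrm (θ₀ - xbar)
              + ∑ s ∈ Finset.range n, r ^ (n - 1 - s) * (α * L * nrm (dd s ω)))
            + α * L * nrm (dd n ω) := by linarith
        _ = r ^ (n + 1) * nrm (θ₀ - xbar)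
            + ∑ s ∈ Finset.range (n + 1), r ^ (n - s) * (α * L * nrm (dd s ω)) := h3
        _ = r ^ (n + 1) * nrm (θ₀ - xbar)
            + ∑ s ∈ Finset.range (n + 1), r ^ (n + 1 - 1 - s) * (α * L * nrm (dd s ω)) := by
          rw [Finset.sum_congr rfl h4]
  -- pointwise squared bound
  have hsqbound : ∀ t ω, nrm (e t ω) ^ 2 ≤ 2 * r ^ (2 * t) * E0
      + (2 * (1 - r)⁻¹ * (α * L) ^ 2)
        * ∑ s ∈ Finset.range t, r ^ (t - 1 - s) * nrm (dd s ω) ^ 2 := by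
    intro t ω
    set a : ℝ := r ^ t * nrm (θ₀ - xbar) with ha
    set b : ℝ := ∑ s ∈ Finset.range t, r ^ (t - 1 - s) * (α * L * nrm (dd s ω)) with hb
    have ha0 : 0 ≤ a := mul_nonneg (pow_nonneg hr0 t) (nrm_nonneg _)
    have hb0 : 0 ≤ b :=
      Finset.sum_nonneg fun s _ => mul_nonneg (pow_nonneg hr0 _)
        (mul_nonneg (mul_nonneg hα0.le hL0.le) (nrm_nonneg _))
    have hN := hNbound t ω
    have hsq1 : nrm (e t ω) ^ 2 ≤ (a + b) ^ 2 :=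
      pow_le_pow_left₀ (nrm_nonneg _) hN 2
    have hsq2 : (a + b) ^ 2 ≤ 2 * a ^ 2 + 2 * b ^ 2 := by nlinarith [sq_nonneg (a - b)]
    have ha2 : a ^ 2 = r ^ (2 * t) * E0 := by
      rw [ha, hE0, mul_pow, ← pow_mul, Nat.mul_comm t 2]
    -- Cauchy-Schwarz on b
    have hCS : b ^ 2 ≤ (∑ s ∈ Finset.range t, r ^ (t - 1 - s))
        * ∑ s ∈ Finset.range t, r ^ (t - 1 - s) * (α * L * nrm (dd s ω)) ^ 2 := by
      have h := Finset.sum_mul_sq_le_sq_mul_sq (Finset.range t)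
        (fun s => Real.sqrt (r ^ (t - 1 - s)))
        (fun s => Real.sqrt (r ^ (t - 1 - s)) * (α * L * nrm (dd s ω)))
      have hfg : ∀ s ∈ Finset.range t,
          Real.sqrt (r ^ (t - 1 - s)) * (Real.sqrt (r ^ (t - 1 - s)) * (α * L * nrm (dd s ω)))
            = r ^ (t - 1 - s) * (α * L * nrm (dd s ω)) := by
        intro s _
        rw [← mul_assoc, Real.mul_self_sqrt (pow_nonneg hr0 _)]
      have hf2 : ∀ s ∈ Finset.range t,
          Real.sqrt (r ^ (t - 1 - s)) ^ 2 = r ^ (t - 1 - s) := by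
        intro s _; exact Real.sq_sqrt (pow_nonneg hr0 _)
      have hg2 : ∀ s ∈ Finset.range t,
          (Real.sqrt (r ^ (t - 1 - s)) * (α * L * nrm (dd s ω))) ^ 2
            = r ^ (t - 1 - s) * (α * L * nrm (dd s ω)) ^ 2 := by
        intro s _
        rw [mul_pow, Real.sq_sqrt (pow_nonneg hr0 _)]
      rw [Finset.sum_congr rfl hfg, Finset.sum_congr rfl hf2, Finset.sum_congr rfl hg2] at h
      exact h
    have hgeo : (∑ s ∈ Finset.range t, r ^ (t - 1 - s)) ≤ (1 - r)⁻¹ := by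
      rw [show (∑ s ∈ Finset.range t, r ^ (t - 1 - s))
          = ∑ j ∈ Finset.range t, r ^ j from Finset.sum_range_reflect (fun j => r ^ j) t]
      exact sum_geom_le hr0 hr1 t
    have hpos2 : 0 ≤ ∑ s ∈ Finset.range t, r ^ (t - 1 - s) * (α * L * nrm (dd s ω)) ^ 2 :=
      Finset.sum_nonneg fun s _ => mul_nonneg (pow_nonneg hr0 _) (sq_nonneg _)
    have hb2 : b ^ 2 ≤ (1 - r)⁻¹
        * ∑ s ∈ Finset.range t, r ^ (t - 1 - s) * (α * L * nrm (dd s ω)) ^ 2 :=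
      hCS.trans (mul_le_mul_of_nonneg_right hgeo hpos2)
    have hfinal : (1 - r)⁻¹ * ∑ s ∈ Finset.range t, r ^ (t - 1 - s) * (α * L * nrm (dd s ω)) ^ 2
        = (1 - r)⁻¹ * (α * L) ^ 2 * ∑ s ∈ Finset.range t, r ^ (t - 1 - s) * nrm (dd s ω) ^ 2 := by
      rw [Finset.mul_sum, Finset.mul_sum]
      exact Finset.sum_congr rfl fun s _ => by ring
    calc nrm (e t ω) ^ 2 ≤ (a + b) ^ 2 := hsq1
      _ ≤ 2 * a ^ 2 + 2 * b ^ 2 := hsq2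
      _ ≤ 2 * (r ^ (2 * t) * E0)
          + 2 * ((1 - r)⁻¹
            * ∑ s ∈ Finset.range t, r ^ (t - 1 - s) * (α * L * nrm (dd s ω)) ^ 2) := by
        refine add_le_add (le_of_eq (by rw [ha2])) ?_
        exact mul_le_mul_of_nonneg_left hb2 (by norm_num)
      _ = 2 * r ^ (2 * t) * E0
          + (2 * (1 - r)⁻¹ * (α * L) ^ 2)
            * ∑ s ∈ Finset.range t, r ^ (t - 1 - s) * nrm (dd s ω) ^ 2 := by
        rw [show 2 * ((1 - r)⁻¹
            * ∑ s ∈ Finset.range t, r ^ (t - 1 - s) * (α * L * nrm (dd s ω)) ^ 2)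
          = 2 * ((1 - r)⁻¹ * (α * L) ^ 2
            * ∑ s ∈ Finset.range t, r ^ (t - 1 - s) * nrm (dd s ω) ^ 2) by rw [hfinal]]
        ring
  -- probabilistic facts
  have hMxi : ∀ (a : ℕ) i, MemLp (fun ω => ξ a ω i - xbar i) 2 μ :=
    fun a i => (hL2 a i).sub (memLp_const _)
  have hInt1 : ∀ (a : ℕ) i, Integrable (fun ω => ξ a ω i) μ :=
    fun a i => (hL2 a i).integrable one_le_two
  have hmean : ∀ (a : ℕ) i, ∫ ω, ξ a ω i ∂μ = xbar i := by
    intro a i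
    have h1 : ∫ y, y i ∂(Measure.map (ξ a) μ) = ∫ ω, ξ a ω i ∂μ :=
      integral_map (hmeas a).aemeasurable (measurable_pi_apply i).aestronglyMeasurable
    have h0 : ∫ y, y i ∂(Measure.map (ξ 0) μ) = ∫ ω, ξ 0 ω i ∂μ :=
      integral_map (hmeas 0).aemeasurable (measurable_pi_apply i).aestronglyMeasurable
    rw [← h1, hident a, h0, ← hxbar i]
  have hmean0 : ∀ (a : ℕ) i, ∫ ω, (ξ a ω i - xbar i) ∂μ = 0 := by
    intro a i
    rw [integral_sub (hInt1 a i) (integrable_const _), hmean, integral_const]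
    simp
  have hvar : ∀ (a : ℕ) i,
      ∫ ω, (ξ a ω i - xbar i) * (ξ a ω i - xbar i) ∂μ = C i i := by
    intro a i
    have hφ : Measurable (fun v : Fin d → ℝ => (v i - xbar i) * (v i - xbar i)) :=
      ((measurable_pi_apply i).sub measurable_const).mul
        ((measurable_pi_apply i).sub measurable_const)
    have h1 : ∫ y, (y i - xbar i) * (y i - xbar i) ∂(Measure.map (ξ a) μ)
        = ∫ ω, (ξ a ω i - xbar i) * (ξ a ω i - xbar i) ∂μ :=
      integral_map (hmeas a).aemeasurable hφ.aestronglyMeasurable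
    have h0 : ∫ y, (y i - xbar i) * (y i - xbar i) ∂(Measure.map (ξ 0) μ)
        = ∫ ω, (ξ 0 ω i - xbar i) * (ξ 0 ω i - xbar i) ∂μ :=
      integral_map (hmeas 0).aemeasurable hφ.aestronglyMeasurable
    rw [← h1, hident a, h0, ← hC i i]
  have hcross : ∀ (a b : ℕ) i, a ≠ b →
      ∫ ω, (ξ a ω i - xbar i) * (ξ b ω i - xbar i) ∂μ = 0 := by
    intro a b i hab
    have hφ : Measurable (fun v : Fin d → ℝ => v i - xbar i) :=
      (measurable_pi_apply i).sub measurable_const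
    have hind : IndepFun (fun ω => ξ a ω i - xbar i) (fun ω => ξ b ω i - xbar i) μ :=
      (hindep.indepFun hab).comp hφ hφ
    have hmul : ∫ ω, (ξ a ω i - xbar i) * (ξ b ω i - xbar i) ∂μ
        = (∫ ω, (ξ a ω i - xbar i) ∂μ) * ∫ ω, (ξ b ω i - xbar i) ∂μ :=
      IndepFun.integral_fun_mul_eq_mul_integral hind ((hMxi a i).integrable one_le_two).aestronglyMeasurable
        ((hMxi b i).integrable one_le_two).aestronglyMeasurable
    rw [hmul, hmean0, hmean0, mul_zero]
  have hprod_int : ∀ (a b : ℕ) i,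
      Integrable (fun ω => (ξ a ω i - xbar i) * (ξ b ω i - xbar i)) μ :=
    fun a b i => integrable_mul_of_memL2 (hMxi a i) (hMxi b i)
  have hpair : ∀ (a b : ℕ) i, ∫ ω, (ξ a ω i - xbar i) * (ξ b ω i - xbar i) ∂μ
      = if a = b then C i i else 0 := by
    intro a b i
    by_cases hab : a = b
    · subst hab; rw [if_pos rfl]; exact hvar a i
    · rw [if_neg hab]; exact hcross a b i hab
  -- coordinates of dd
  have hddi : ∀ (t : ℕ) ω i, dd t ω i
      = ((t : ℝ) + 1)⁻¹ * ∑ a ∈ Finset.range (t + 1), (ξ a ω i - xbar i) := by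
    intro t ω i
    simp only [hdd, havg, Pi.sub_apply, Pi.smul_apply, smul_eq_mul, Finset.sum_apply]
    rw [Finset.sum_sub_distrib, Finset.sum_const, Finset.card_range, mul_sub]
    congr 1
    rw [nsmul_eq_mul]
    have hc : ((t : ℝ) + 1) ≠ 0 := by positivity
    push_cast
    field_simp
  have hddL2 : ∀ (t : ℕ) i, MemLp (fun ω => dd t ω i) 2 μ := by
    intro t i
    rw [show (fun ω => dd t ω i)
        = fun ω => ((t : ℝ) + 1)⁻¹ * ∑ a ∈ Finset.range (t + 1), (ξ a ω i - xbar i)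
        from funext fun ω => hddi t ω i]
    exact (memLp_finset_sum _ fun a _ => hMxi a i).const_mul _
  have hIδsq : ∀ (s : ℕ), Integrable (fun ω => nrm (dd s ω) ^ 2) μ := by
    intro s
    rw [show (fun ω => nrm (dd s ω) ^ 2) = fun ω => ∑ i, dd s ω i * dd s ω i
        from funext fun ω => by rw [nrm_sq]; rfl]
    exact integrable_finset_sum _ fun i _ => integrable_mul_of_memL2 (hddL2 s i) (hddL2 s i)
  have hEdd : ∀ (s : ℕ) i, ∫ ω, dd s ω i * dd s ω i ∂μ = C i i * ((s : ℝ) + 1)⁻¹ := by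
    intro s i
    have heq : (fun ω => dd s ω i * dd s ω i)
        = fun ω => ∑ a ∈ Finset.range (s + 1), ∑ b ∈ Finset.range (s + 1),
            (((s : ℝ) + 1)⁻¹ * ((s : ℝ) + 1)⁻¹)
              * ((ξ a ω i - xbar i) * (ξ b ω i - xbar i)) := by
      funext ω
      rw [hddi s ω i, mul_mul_mul_comm, Finset.sum_mul_sum, Finset.mul_sum]
      refine Finset.sum_congr rfl fun a _ => ?_
      rw [Finset.mul_sum]
    rw [heq, integral_finset_sum _
      (fun a _ => integrable_finset_sum _ (fun b _ => (hprod_int a b i).const_mul _))]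
    have h3 : ∀ a ∈ Finset.range (s + 1),
        (∫ ω, ∑ b ∈ Finset.range (s + 1),
            (((s : ℝ) + 1)⁻¹ * ((s : ℝ) + 1)⁻¹)
              * ((ξ a ω i - xbar i) * (ξ b ω i - xbar i)) ∂μ)
          = (((s : ℝ) + 1)⁻¹ * ((s : ℝ) + 1)⁻¹) * C i i := by
      intro a ha
      rw [integral_finset_sum _ (fun b _ => (hprod_int a b i).const_mul _)]
      rw [Finset.sum_congr rfl (fun b _ => by rw [integral_const_mul, hpair])]
      rw [← Finset.mul_sum, Finset.sum_ite_eq (Finset.range (s + 1)) a fun _ => C i i,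
        if_pos ha]
    rw [Finset.sum_congr rfl h3, Finset.sum_const, Finset.card_range, nsmul_eq_mul]
    have hc : ((s : ℝ) + 1) ≠ 0 := by positivity
    push_cast
    field_simp
  set T : ℝ := ∑ i, C i i with hT
  have hT0 : 0 ≤ T := by
    rw [hT]
    refine Finset.sum_nonneg fun i _ => ?_
    rw [hC i i]
    exact integral_nonneg fun ω => mul_self_nonneg _
  have hEδ : ∀ (s : ℕ), ∫ ω, nrm (dd s ω) ^ 2 ∂μ = T * ((s : ℝ) + 1)⁻¹ := by
    intro s
    rw [show (fun ω => nrm (dd s ω) ^ 2) = fun ω => ∑ i, dd s ω i * dd s ω i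
        from funext fun ω => by rw [nrm_sq]; rfl]
    rw [integral_finset_sum _
      (fun i _ => integrable_mul_of_memL2 (hddL2 s i) (hddL2 s i))]
    rw [Finset.sum_congr rfl (fun i _ => hEdd s i), ← Finset.sum_mul]
  -- integrability of quadratic forms
  have hIquad : ∀ (x : Ω → Fin d → ℝ), (∀ i, MemLp (fun ω => x ω i) 2 μ) →
      Integrable (fun ω => x ω ⬝ᵥ H.mulVec (x ω)) μ := by
    intro x hx
    have heq : (fun ω => x ω ⬝ᵥ H.mulVec (x ω))
        = fun ω => ∑ i, ∑ j, H i j * (x ω i * x ω j) := by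
      funext ω
      simp only [dotProduct, mulVec, Finset.mul_sum]
      exact Finset.sum_congr rfl fun i _ => Finset.sum_congr rfl fun j _ => by ring
    rw [heq]
    exact integrable_finset_sum _ fun i _ => integrable_finset_sum _ fun j _ =>
      (integrable_mul_of_memL2 (hx i) (hx j)).const_mul _
  have hMxi2 : ∀ j, MemLp (fun ω => xbar j - ξ 0 ω j) 2 μ :=
    fun j => (memLp_const _).sub (hL2 0 j)
  have hmean0' : ∀ j, ∫ ω, (xbar j - ξ 0 ω j) ∂μ = 0 := by
    intro j
    rw [integral_sub (integrable_const _) (hInt1 0 j), integral_const, hmean 0 j]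
    simp
  have hIlin : ∀ w : Fin d → ℝ,
      Integrable (fun ω => w ⬝ᵥ H.mulVec (xbar - ξ 0 ω)) μ := by
    intro w
    have heq : (fun ω => w ⬝ᵥ H.mulVec (xbar - ξ 0 ω))
        = fun ω => ∑ i, ∑ j, (w i * H i j) * (xbar j - ξ 0 ω j) := by
      funext ω
      simp only [dotProduct, mulVec, Finset.mul_sum, Pi.sub_apply]
      exact Finset.sum_congr rfl fun i _ => Finset.sum_congr rfl fun j _ => by ring
    rw [heq]
    exact integrable_finset_sum _ fun i _ => integrable_finset_sum _ fun j _ =>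
      ((hMxi2 j).integrable one_le_two).const_mul _
  have hElin : ∀ w : Fin d → ℝ, ∫ ω, w ⬝ᵥ H.mulVec (xbar - ξ 0 ω) ∂μ = 0 := by
    intro w
    have heq : (fun ω => w ⬝ᵥ H.mulVec (xbar - ξ 0 ω))
        = fun ω => ∑ i, ∑ j, (w i * H i j) * (xbar j - ξ 0 ω j) := by
      funext ω
      simp only [dotProduct, mulVec, Finset.mul_sum, Pi.sub_apply]
      exact Finset.sum_congr rfl fun i _ => Finset.sum_congr rfl fun j _ => by ring
    rw [heq, integral_finset_sum _ (fun i _ => integrable_finset_sum _ fun j _ =>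
      ((hMxi2 j).integrable one_le_two).const_mul _)]
    refine Finset.sum_eq_zero fun i _ => ?_
    rw [integral_finset_sum _ (fun j _ => ((hMxi2 j).integrable one_le_two).const_mul _)]
    refine Finset.sum_eq_zero fun j _ => ?_
    rw [integral_const_mul, hmean0' j, mul_zero]
  -- decomposition of F
  have hFsplit : ∀ v, F v = (1 / 2 : ℝ) * ((v - xbar) ⬝ᵥ H.mulVec (v - xbar)) + F xbar := by
    intro v
    have hpt : ∀ ω, (1 / 2 : ℝ) * ((v - ξ 0 ω) ⬝ᵥ H.mulVec (v - ξ 0 ω))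
        = ((1 / 2 : ℝ) * ((v - xbar) ⬝ᵥ H.mulVec (v - xbar))
            + (v - xbar) ⬝ᵥ H.mulVec (xbar - ξ 0 ω))
          + (1 / 2 : ℝ) * ((xbar - ξ 0 ω) ⬝ᵥ H.mulVec (xbar - ξ 0 ω)) := by
      intro ω
      have hv : v - ξ 0 ω = (v - xbar) + (xbar - ξ 0 ω) :=
        (sub_add_sub_cancel v xbar (ξ 0 ω)).symm
      rw [hv, Matrix.mulVec_add, dotProduct_add, add_dotProduct, add_dotProduct]
      have hcr : (xbar - ξ 0 ω) ⬝ᵥ H.mulVec (v - xbar)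
          = (v - xbar) ⬝ᵥ H.mulVec (xbar - ξ 0 ω) := by
        rw [dotProduct_comm, dot_mulVec_left, hHt]
      rw [hcr]; ring
    rw [hF v, hF xbar]
    rw [show (fun ω => (1 / 2 : ℝ) * ((v - ξ 0 ω) ⬝ᵥ H.mulVec (v - ξ 0 ω)))
        = fun ω => ((1 / 2 : ℝ) * ((v - xbar) ⬝ᵥ H.mulVec (v - xbar))
            + (v - xbar) ⬝ᵥ H.mulVec (xbar - ξ 0 ω))
          + (1 / 2 : ℝ) * ((xbar - ξ 0 ω) ⬝ᵥ H.mulVec (xbar - ξ 0 ω))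
        from funext hpt]
    have hI3 : Integrable
        (fun ω => (1 / 2 : ℝ) * ((xbar - ξ 0 ω) ⬝ᵥ H.mulVec (xbar - ξ 0 ω))) μ :=
      Integrable.const_mul (hIquad (fun ω => xbar - ξ 0 ω) (fun i => by
        simpa using hMxi2 i)) _
    have hI12 : Integrable (fun ω => (1 / 2 : ℝ) * ((v - xbar) ⬝ᵥ H.mulVec (v - xbar))
        + (v - xbar) ⬝ᵥ H.mulVec (xbar - ξ 0 ω)) μ := (integrable_const _).add (hIlin _)
    rw [integral_add hI12 hI3, integral_add (integrable_const _) (hIlin _),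
      integral_const, hElin]
    simp [measure_univ]
  have hE00 : 0 ≤ E0 := hE0 ▸ sq_nonneg _
  have hlbF : ∀ v, F xbar ≤ F v := by
    intro v
    rw [hFsplit v]
    have := psd_dot hHpsd (v - xbar)
    linarith
  have hstar : fstar = F xbar := by
    rw [hfstar]
    refine le_antisymm (ciInf_le ⟨F xbar, ?_⟩ xbar) (le_ciInf hlbF)
    rintro y ⟨v, rfl⟩
    exact hlbF v
  have hgap : ∀ v, F v - fstar = (1 / 2 : ℝ) * ((v - xbar) ⬝ᵥ H.mulVec (v - xbar)) := by
    intro v; rw [hFsplit v, hstar]; ring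
  -- L² bounds for the error iterates
  have heL2 : ∀ (t : ℕ) i, MemLp (fun ω => e t ω i) 2 μ := by
    intro t; induction t with
    | zero =>
      intro i
      rw [show (fun ω => e 0 ω i) = fun _ => (θ₀ - xbar) i
          from funext fun ω => by rw [he0 ω]]
      exact memLp_const _
    | succ n ih =>
      intro i
      have heq : (fun ω => e (n + 1) ω i)
          = fun ω => (∑ j, A i j * e n ω j) + α * ∑ j, H i j * dd n ω j := by
        funext ω
        rw [heRec n ω]
        simp [mulVec, dotProduct, Pi.add_apply, Pi.smul_apply, smul_eq_mul]
      rw [heq]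
      exact (memLp_finset_sum _ fun j _ => (ih j).const_mul _).add
        ((memLp_finset_sum _ fun j _ => (hddL2 n j).const_mul _).const_mul _)
  have hIesq : ∀ (t : ℕ), Integrable (fun ω => nrm (e t ω) ^ 2) μ := by
    intro t
    rw [show (fun ω => nrm (e t ω) ^ 2) = fun ω => ∑ i, e t ω i * e t ω i
        from funext fun ω => by rw [nrm_sq]; rfl]
    exact integrable_finset_sum _ fun i _ => integrable_mul_of_memL2 (heL2 t i) (heL2 t i)
  have hIeHe : ∀ (t : ℕ), Integrable (fun ω => e t ω ⬝ᵥ H.mulVec (e t ω)) μ :=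
    fun t => hIquad _ (heL2 t)
  -- expectation identity and bound
  have hEF : ∀ (t : ℕ), (∫ ω, F (θ t ω) ∂μ) - fstar
      = ∫ ω, (1 / 2 : ℝ) * (e t ω ⬝ᵥ H.mulVec (e t ω)) ∂μ := by
    intro t
    have hpt : ∀ ω, F (θ t ω)
        = (1 / 2 : ℝ) * (e t ω ⬝ᵥ H.mulVec (e t ω)) + fstar := by
      intro ω
      have h := hgap (θ t ω)
      have he' : e t ω = θ t ω - xbar := rfl
      rw [he']
      linarith
    rw [show (fun ω => F (θ t ω))
        = fun ω => (1 / 2 : ℝ) * (e t ω ⬝ᵥ H.mulVec (e t ω)) + fstar from funext hpt]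
    rw [integral_add ((hIeHe t).const_mul _) (integrable_const _), integral_const]
    simp [measure_univ]
  set coef : ℝ := 2 * (1 - r)⁻¹ * (α * L) ^ 2 with hcoef
  have hcoef0 : 0 ≤ coef := by
    rw [hcoef]
    have : (0:ℝ) < (1 - r)⁻¹ := inv_pos.mpr hr1'
    positivity
  have hEbound : ∀ (t : ℕ), (∫ ω, F (θ t ω) ∂μ) - fstar
      ≤ (L / 2) * (2 * r ^ (2 * t) * E0
        + coef * ∑ s ∈ Finset.range t, r ^ (t - 1 - s) * (T * ((s : ℝ) + 1)⁻¹)) := by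
    intro t
    rw [hEF t]
    have hmono : ∫ ω, (1 / 2 : ℝ) * (e t ω ⬝ᵥ H.mulVec (e t ω)) ∂μ
        ≤ ∫ ω, (L / 2) * nrm (e t ω) ^ 2 ∂μ := by
      refine integral_mono ((hIeHe t).const_mul _) ((hIesq t).const_mul _) fun ω => ?_
      have h1 := hquadH (e t ω)
      have h2 := nrm_sq (e t ω)
      simp only
      nlinarith
    have hIrhs : Integrable (fun ω => 2 * r ^ (2 * t) * E0
        + coef * ∑ s ∈ Finset.range t, r ^ (t - 1 - s) * nrm (dd s ω) ^ 2) μ :=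
      (integrable_const _).add
        ((integrable_finset_sum _ fun s _ => (hIδsq s).const_mul _).const_mul _)
    have h1 : ∫ ω, nrm (e t ω) ^ 2 ∂μ
        ≤ ∫ ω, (2 * r ^ (2 * t) * E0
            + coef * ∑ s ∈ Finset.range t, r ^ (t - 1 - s) * nrm (dd s ω) ^ 2) ∂μ :=
      integral_mono (hIesq t) hIrhs fun ω => hsqbound t ω
    have h2 : ∫ ω, (2 * r ^ (2 * t) * E0
          + coef * ∑ s ∈ Finset.range t, r ^ (t - 1 - s) * nrm (dd s ω) ^ 2) ∂μ
        = 2 * r ^ (2 * t) * E0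
          + coef * ∑ s ∈ Finset.range t, r ^ (t - 1 - s) * (T * ((s : ℝ) + 1)⁻¹) := by
      rw [integral_add (integrable_const _)
        ((integrable_finset_sum _ fun s _ => (hIδsq s).const_mul _).const_mul _),
        integral_const]
      simp only [measure_univ, probReal_univ, ENNReal.toReal_one, smul_eq_mul, one_mul]
      congr 1
      rw [integral_const_mul, integral_finset_sum _ (fun s _ => (hIδsq s).const_mul _)]
      congr 1
      refine Finset.sum_congr rfl fun s _ => ?_
      rw [integral_const_mul, hEδ s]
    have h3 : ∫ ω, (L / 2) * nrm (e t ω) ^ 2 ∂μ = (L / 2) * ∫ ω, nrm (e t ω) ^ 2 ∂μ :=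
      integral_const_mul _ _
    calc ∫ ω, (1 / 2 : ℝ) * (e t ω ⬝ᵥ H.mulVec (e t ω)) ∂μ
        ≤ ∫ ω, (L / 2) * nrm (e t ω) ^ 2 ∂μ := hmono
      _ = (L / 2) * ∫ ω, nrm (e t ω) ^ 2 ∂μ := h3
      _ ≤ (L / 2) * (2 * r ^ (2 * t) * E0
          + coef * ∑ s ∈ Finset.range t, r ^ (t - 1 - s) * (T * ((s : ℝ) + 1)⁻¹)) := by
        refine mul_le_mul_of_nonneg_left ?_ (by positivity)
        rw [← h2]
        exact h1
  -- final bound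
  set M0 : ℝ := (L / 2) * (2 * E0 * ((1 - r)⁻¹) ^ 2 + coef * (T * ((1 - r)⁻¹) ^ 2)) with hM0
  have hM00 : 0 ≤ M0 := by
    rw [hM0]
    have h1 : (0:ℝ) ≤ (1 - r)⁻¹ := (inv_pos.mpr hr1').le
    have h2 : (0:ℝ) ≤ 2 * E0 * ((1 - r)⁻¹) ^ 2 := by positivity
    have h3 : (0:ℝ) ≤ coef * (T * ((1 - r)⁻¹) ^ 2) :=
      mul_nonneg hcoef0 (mul_nonneg hT0 (by positivity))
    have h4 : (0:ℝ) ≤ L / 2 := by positivity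
    nlinarith
  refine ⟨M0 + 1, by linarith, fun t ht => ?_⟩
  have ht0 : (0 : ℝ) < t := by exact_mod_cast ht
  have hgeo1 : r ^ (2 * t) ≤ ((1 - r)⁻¹) ^ 2 / t := by
    have h1 : r ^ (2 * t) ≤ r ^ t := pow_le_pow_of_le_one hr0 hr1.le (by omega)
    have h2 := single_mul_geom_le hr0 hr1 t
    rw [le_div_iff₀ ht0]
    nlinarith [mul_le_mul_of_nonneg_right h1 ht0.le, pow_nonneg hr0 t]
  have hgeo2 : ∑ s ∈ Finset.range t, r ^ (t - 1 - s) * (T * ((s : ℝ) + 1)⁻¹)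
      ≤ T * ((1 - r)⁻¹) ^ 2 / t := by
    have hcs := conv_sum_le hr0 hr1 ht
    have heqs : ∑ s ∈ Finset.range t, r ^ (t - 1 - s) * (T * ((s : ℝ) + 1)⁻¹)
        = T * ∑ s ∈ Finset.range t, r ^ (t - 1 - s) * ((s : ℝ) + 1)⁻¹ := by
      rw [Finset.mul_sum]
      exact Finset.sum_congr rfl fun s _ => by ring
    rw [heqs]
    calc T * ∑ s ∈ Finset.range t, r ^ (t - 1 - s) * ((s : ℝ) + 1)⁻¹
        ≤ T * (((1 - r)⁻¹) ^ 2 / t) := mul_le_mul_of_nonneg_left hcs hT0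
      _ = T * ((1 - r)⁻¹) ^ 2 / t := by ring
  have hA1 : 2 * r ^ (2 * t) * E0 ≤ 2 * (((1 - r)⁻¹) ^ 2 / t) * E0 := by
    nlinarith
  have hA2 : coef * ∑ s ∈ Finset.range t, r ^ (t - 1 - s) * (T * ((s : ℝ) + 1)⁻¹)
      ≤ coef * (T * ((1 - r)⁻¹) ^ 2 / t) := mul_le_mul_of_nonneg_left hgeo2 hcoef0
  calc (∫ ω, F (θ t ω) ∂μ) - fstar
      ≤ (L / 2) * (2 * r ^ (2 * t) * E0
        + coef * ∑ s ∈ Finset.range t, r ^ (t - 1 - s) * (T * ((s : ℝ) + 1)⁻¹)) := hEbound t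
    _ ≤ (L / 2) * (2 * (((1 - r)⁻¹) ^ 2 / t) * E0 + coef * (T * ((1 - r)⁻¹) ^ 2 / t)) := by
        refine mul_le_mul_of_nonneg_left ?_ (by positivity)
        linarith
    _ = M0 / t := by
        rw [hM0]
        ring
    _ ≤ (M0 + 1) / t := (div_le_div_iff_of_pos_right ht0).mpr (by linarith)
end

section
/- Let $a > 0$, $b > 0$, $r > 0$ and $p, q \geq 0$. The function $g : (0, \infty) \to \mathbb{R}$ defined by $g(\alpha) = \dfrac{-a\alpha + \frac{b}{2}\alpha^2}{\sqrt{r + p\alpha^2 + \frac{q}{4}\alpha^4}}$ has exactly one local (hence global) minimizer on $(0, \infty)$, at which $g$ takes a strictly negative value. -/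
open Topology Filter


/-- The probability-of-improvement step size objective
`g(α) = (-aα + (b/2)α²) / √(r + pα² + (q/4)α⁴)` with `a, b, r > 0` and `p, q ≥ 0`
has exactly one local minimizer on `(0, ∞)`; it is a global minimizer on `(0, ∞)`
and `g` is strictly negative there. -/
theorem pi_step_size_unique_minimizer
    (a b r p q : ℝ) (ha : 0 < a) (hb : 0 < b) (hr : 0 < r) (hp : 0 ≤ p) (hq : 0 ≤ q)
    (g : ℝ → ℝ)
    (hg : ∀ α : ℝ, g α =
      (-a * α + b / 2 * α ^ 2) / Real.sqrt (r + p * α ^ 2 + q / 4 * α ^ 4)) :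
    ∃ α₀ : ℝ, α₀ ∈ Set.Ioi (0 : ℝ) ∧ IsLocalMinOn g (Set.Ioi (0 : ℝ)) α₀ ∧
      (∀ α ∈ Set.Ioi (0 : ℝ), IsLocalMinOn g (Set.Ioi (0 : ℝ)) α → α = α₀) ∧
      (∀ α ∈ Set.Ioi (0 : ℝ), g α₀ ≤ g α) ∧
      g α₀ < 0 := by
  obtain rfl : g = fun α : ℝ =>
      (-a * α + b / 2 * α ^ 2) / Real.sqrt (r + p * α ^ 2 + q / 4 * α ^ 4) := funext hg
  set g : ℝ → ℝ := fun α : ℝ =>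
      (-a * α + b / 2 * α ^ 2) / Real.sqrt (r + p * α ^ 2 + q / 4 * α ^ 4) with hgdef
  set F : ℝ → ℝ := fun α : ℝ => -(a * r) + b * r * α + b * p / 2 * α ^ 3 + a * q / 4 * α ^ 4
    with hFdef
  -- the derivative of `g` is `F α / (√u α)³`
  have key : ∀ α : ℝ,
      HasDerivAt g (F α / (Real.sqrt (r + p * α ^ 2 + q / 4 * α ^ 4)) ^ 3) α := by
    intro α
    have huα : 0 < r + p * α ^ 2 + q / 4 * α ^ 4 := by positivity
    have hDα : 0 < Real.sqrt (r + p * α ^ 2 + q / 4 * α ^ 4) := Real.sqrt_pos.mpr huα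
    have hN : HasDerivAt (fun x : ℝ => -a * x + b / 2 * x ^ 2) (-a + b * α) α := by
      have h1 : HasDerivAt (fun x : ℝ => -a * x) (-a) α := by
        simpa using (hasDerivAt_id α).const_mul (-a)
      have h2 : HasDerivAt (fun x : ℝ => b / 2 * x ^ 2) (b / 2 * (2 * α)) α := by
        simpa using (hasDerivAt_pow 2 α).const_mul (b / 2)
      exact (h1.add h2).congr_deriv (by ring)
    have hu : HasDerivAt (fun x : ℝ => r + p * x ^ 2 + q / 4 * x ^ 4)
        (2 * p * α + q * α ^ 3) α := by
      have h2 : HasDerivAt (fun x : ℝ => p * x ^ 2) (p * (2 * α)) α := by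
        simpa using (hasDerivAt_pow 2 α).const_mul p
      have h4 : HasDerivAt (fun x : ℝ => q / 4 * x ^ 4) (q / 4 * (4 * α ^ 3)) α := by
        simpa using (hasDerivAt_pow 4 α).const_mul (q / 4)
      exact (((hasDerivAt_const α r).add h2).add h4).congr_deriv (by ring)
    have hD : HasDerivAt (fun x : ℝ => Real.sqrt (r + p * x ^ 2 + q / 4 * x ^ 4))
        ((2 * p * α + q * α ^ 3) / (2 * Real.sqrt (r + p * α ^ 2 + q / 4 * α ^ 4))) α := by
      have := (Real.hasDerivAt_sqrt huα.ne').comp α hu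
      exact this.congr_deriv (by ring)
    have := hN.div hD hDα.ne'
    refine this.congr_deriv ?_
    have hsq : Real.sqrt (r + p * α ^ 2 + q / 4 * α ^ 4) ^ 2 = r + p * α ^ 2 + q / 4 * α ^ 4 :=
      Real.sq_sqrt huα.le
    set d := Real.sqrt (r + p * α ^ 2 + q / 4 * α ^ 4)
    field_simp
    linear_combination (4 * b * α - 4 * a) * hsq
  have hc : Continuous g := by
    rw [continuous_iff_continuousAt]; exact fun x => (key x).continuousAt
  -- F is strictly monotone on [0, ∞)
  have hFmono : StrictMonoOn F (Set.Ici (0 : ℝ)) := by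
    intro x hx y hy hxy
    simp only [hFdef, Set.mem_Ici] at *
    have h3 := mul_le_mul_of_nonneg_left (pow_le_pow_left₀ hx hxy.le 3)
      (by positivity : (0:ℝ) ≤ b * p / 2)
    have h4 := mul_le_mul_of_nonneg_left (pow_le_pow_left₀ hx hxy.le 4)
      (by positivity : (0:ℝ) ≤ a * q / 4)
    have h1 := mul_lt_mul_of_pos_left hxy (mul_pos hb hr)
    linarith
  -- F has a root α₀ > 0
  have hFc : Continuous F := by fun_prop
  have hM : 0 ≤ F (a / b + 1) := by
    have h1 : 0 < a / b + 1 := by positivity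
    have h2 : b * r * (a / b + 1) = a * r + b * r := by field_simp
    simp only [hFdef]
    have h3 := mul_nonneg (by positivity : (0:ℝ) ≤ b * p / 2) (pow_nonneg h1.le 3)
    have h4 := mul_nonneg (by positivity : (0:ℝ) ≤ a * q / 4) (pow_nonneg h1.le 4)
    linarith [mul_pos hb hr]
  have h0M : (0 : ℝ) ≤ a / b + 1 := by positivity
  have hF0 : F 0 < 0 := by simp only [hFdef]; nlinarith [mul_pos ha hr]
  obtain ⟨α₀, hα₀mem, hFα₀⟩ : ∃ α₀ ∈ Set.Icc (0 : ℝ) (a / b + 1), F α₀ = 0 := by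
    have := intermediate_value_Icc h0M hFc.continuousOn
    have h0 : (0 : ℝ) ∈ Set.Icc (F 0) (F (a / b + 1)) := ⟨hF0.le, hM⟩
    obtain ⟨x, hx, hfx⟩ := this h0
    exact ⟨x, hx, hfx⟩
  have hα₀pos : 0 < α₀ := by
    rcases hα₀mem.1.lt_or_eq with h | h
    · exact h
    · exact absurd (h ▸ hFα₀) (by simpa [← h] using hF0.ne)
  -- g strictly decreasing on (0, α₀], strictly increasing on [α₀, ∞)
  have hanti : StrictAntiOn g (Set.Ioc 0 α₀) := by
    apply strictAntiOn_of_deriv_neg (convex_Ioc 0 α₀) hc.continuousOn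
    intro x hx
    rw [interior_Ioc] at hx
    rw [(key x).deriv]
    apply div_neg_of_neg_of_pos
    · rw [← hFα₀]
      exact hFmono (Set.mem_Ici.mpr hx.1.le) (Set.mem_Ici.mpr hα₀pos.le) hx.2
    · positivity
  have hmono : StrictMonoOn g (Set.Ici α₀) := by
    apply strictMonoOn_of_deriv_pos (convex_Ici α₀) hc.continuousOn
    intro x hx
    rw [interior_Ici] at hx
    rw [(key x).deriv]
    apply div_pos
    · rw [show (0:ℝ) = F α₀ from hFα₀.symm]
      exact hFmono (Set.mem_Ici.mpr hα₀pos.le) (Set.mem_Ici.mpr (hα₀pos.trans hx).le) hx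
    · positivity
  -- global minimum
  have hglob : ∀ α ∈ Set.Ioi (0 : ℝ), g α₀ ≤ g α := by
    intro α hα
    rcases lt_trichotomy α α₀ with h | h | h
    · exact (hanti ⟨hα, h.le⟩ ⟨hα₀pos, le_rfl⟩ h).le
    · exact h ▸ le_rfl
    · exact (hmono Set.self_mem_Ici (Set.mem_Ici.mpr h.le) h).le
  have hminon : IsMinOn g (Set.Ioi (0:ℝ)) α₀ := isMinOn_iff.mpr hglob
  refine ⟨α₀, hα₀pos, hminon.localize, ?_, hglob, ?_⟩
  · -- uniqueness of the local minimizer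
    intro α hα hloc
    by_contra hne
    rcases lt_or_gt_of_ne hne with h | h
    · -- α < α₀ : points slightly to the right are strictly smaller
      have hsub : Set.Ioo α α₀ ⊆ Set.Ioi (0 : ℝ) := fun x hx =>
        lt_trans (Set.mem_Ioi.mp hα) hx.1
      have hle : 𝓝[Set.Ioo α α₀] α ≤ 𝓝[Set.Ioi (0:ℝ)] α := nhdsWithin_mono α hsub
      haveI : (𝓝[Set.Ioo α α₀] α).NeBot := left_nhdsWithin_Ioo_neBot h
      obtain ⟨x, hgx, hx⟩ :=
        ((hloc.filter_mono hle).and eventually_mem_nhdsWithin).exists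
      have : g x < g α := hanti ⟨hα, h.le⟩ ⟨lt_trans (Set.mem_Ioi.mp hα) hx.1, hx.2.le⟩ hx.1
      linarith
    · -- α > α₀ : points slightly to the left are strictly smaller
      have hsub : Set.Ioo α₀ α ⊆ Set.Ioi (0 : ℝ) := fun x hx => lt_trans hα₀pos hx.1
      have hle : 𝓝[Set.Ioo α₀ α] α ≤ 𝓝[Set.Ioi (0:ℝ)] α := nhdsWithin_mono α hsub
      haveI : (𝓝[Set.Ioo α₀ α] α).NeBot := right_nhdsWithin_Ioo_neBot h
      obtain ⟨x, hgx, hx⟩ :=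
        ((hloc.filter_mono hle).and eventually_mem_nhdsWithin).exists
      have : g x < g α := hmono (Set.mem_Ici.mpr hx.1.le) (Set.mem_Ici.mpr h.le) hx.2
      linarith
  · -- negativity : g α₀ ≤ g (a/b) < 0
    have hab : (0 : ℝ) < a / b := by positivity
    have h1 : g α₀ ≤ g (a / b) := hglob _ (Set.mem_Ioi.mpr hab)
    have h2 : g (a / b) < 0 := by
      apply div_neg_of_neg_of_pos
      · have heq : -a * (a / b) + b / 2 * (a / b) ^ 2 = -(a ^ 2 / (2 * b)) := by
          field_simp; ring
        have hpos : 0 < a ^ 2 / (2 * b) := by positivity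
        rw [heq]; linarith
      · apply Real.sqrt_pos.mpr; positivity
    linarith
end

section
/- Let $a > 0$, $b \in \mathbb{R}$, $r > 0$, $p, q \geq 0$ and $q_6 > 0$. The function $g : [0, \infty) \to \mathbb{R}$ defined by $g(\alpha) = \dfrac{-a\alpha + \frac{b}{2}\alpha^2}{\sqrt{r + p\alpha^2 + \frac{q}{4}\alpha^4 + q_6\,\alpha^6}}$ satisfies $g(0) = 0$ and $\lim_{\alpha \to \infty} g(\alpha) = 0$, takes strictly negative values, and attains its infimum at some finite $\alpha^\ast \in (0, \infty)$ with $g(\alpha^\ast) < 0$. In particular, even when the curvature $b$ is negative, the probability-of-improvement step size is finite and positive. -/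
open Filter

/-- With a third-order variance correction `q₆ α⁶` (with `q₆ > 0`), the
probability-of-improvement objective
`g(α) = (-aα + (b/2)α²) / √(r + pα² + (q/4)α⁴ + q₆α⁶)` satisfies `g 0 = 0`,
`g(α) → 0` as `α → ∞`, takes strictly negative values, and attains its infimum over
`[0, ∞)` at some finite `α⋆ ∈ (0, ∞)` with `g α⋆ < 0` — even when the curvature `b`
is negative, the optimal step size is finite and positive. -/
theorem pi_step_size_finite_with_sixth_order_correction
    (a b r p q q₆ : ℝ) (ha : 0 < a) (hr : 0 < r) (hp : 0 ≤ p) (hq : 0 ≤ q) (hq₆ : 0 < q₆)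
    (g : ℝ → ℝ)
    (hg : ∀ α : ℝ, g α =
      (-a * α + b / 2 * α ^ 2) /
        Real.sqrt (r + p * α ^ 2 + q / 4 * α ^ 4 + q₆ * α ^ 6)) :
    g 0 = 0 ∧
    Tendsto g atTop (nhds 0) ∧
    (∃ α : ℝ, 0 ≤ α ∧ g α < 0) ∧
    (∃ αstar : ℝ, 0 < αstar ∧ (∀ α : ℝ, 0 ≤ α → g αstar ≤ g α) ∧ g αstar < 0) := by
  have hD : ∀ α : ℝ, 0 < r + p * α ^ 2 + q / 4 * α ^ 4 + q₆ * α ^ 6 := by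
    intro α
    nlinarith [sq_nonneg α, sq_nonneg (α ^ 2), sq_nonneg (α ^ 3),
      mul_nonneg hp (sq_nonneg α), mul_nonneg hq (sq_nonneg (α ^ 2)),
      mul_nonneg hq₆.le (sq_nonneg (α ^ 3))]
  have hgeq : g = fun α : ℝ => (-a * α + b / 2 * α ^ 2) /
      Real.sqrt (r + p * α ^ 2 + q / 4 * α ^ 4 + q₆ * α ^ 6) := funext hg
  have hcont : Continuous g := by
    rw [hgeq]
    apply Continuous.div (by continuity) (by continuity)
    intro α
    exact ne_of_gt (Real.sqrt_pos.mpr (hD α))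
  have hg0 : g 0 = 0 := by rw [hg]; norm_num
  -- tendsto
  set C : ℝ := (a + |b| / 2) / Real.sqrt q₆ with hC
  have hsq₆ : 0 < Real.sqrt q₆ := Real.sqrt_pos.mpr hq₆
  have hbound : ∀ᶠ α : ℝ in atTop, ‖g α‖ ≤ C / α := by
    filter_upwards [eventually_ge_atTop (1 : ℝ)] with α hα
    have hα0 : (0 : ℝ) ≤ α := by linarith
    have hnum : |(-a * α + b / 2 * α ^ 2)| ≤ (a + |b| / 2) * α ^ 2 := by
      have h1 : |(-a * α + b / 2 * α ^ 2)| ≤ |(-a * α)| + |b / 2 * α ^ 2| := abs_add_le _ _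
      have h2 : |(-a * α)| = a * α := by
        rw [abs_mul, abs_neg, abs_of_nonneg ha.le, abs_of_nonneg hα0]
      have h3 : |b / 2 * α ^ 2| = |b| / 2 * α ^ 2 := by
        rw [abs_mul, abs_div, abs_of_nonneg (sq_nonneg α)]; norm_num
      have h4 : a * α ≤ a * α ^ 2 := by
        nlinarith [mul_nonneg (mul_nonneg ha.le hα0) (by linarith : (0:ℝ) ≤ α - 1)]
      calc |(-a * α + b / 2 * α ^ 2)| ≤ a * α + |b| / 2 * α ^ 2 := by rw [h2, h3] at h1; exact h1
        _ ≤ (a + |b| / 2) * α ^ 2 := by nlinarith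
    have hden : Real.sqrt q₆ * α ^ 3 ≤
        Real.sqrt (r + p * α ^ 2 + q / 4 * α ^ 4 + q₆ * α ^ 6) := by
      have h6 : q₆ * α ^ 6 ≤ r + p * α ^ 2 + q / 4 * α ^ 4 + q₆ * α ^ 6 := by
        nlinarith [sq_nonneg α, mul_nonneg hp (sq_nonneg α),
          mul_nonneg hq (sq_nonneg (α ^ 2))]
      calc Real.sqrt q₆ * α ^ 3 = Real.sqrt (q₆ * α ^ 6) := by
            rw [Real.sqrt_mul hq₆.le, show α ^ 6 = (α ^ 3) ^ 2 by ring,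
              Real.sqrt_sq (by positivity)]
        _ ≤ _ := Real.sqrt_le_sqrt h6
    rw [hg]
    rw [Real.norm_eq_abs, abs_div, abs_of_nonneg (Real.sqrt_nonneg _)]
    have hden0 : (0 : ℝ) < Real.sqrt q₆ * α ^ 3 := by positivity
    have h5 : |(-a * α + b / 2 * α ^ 2)| / Real.sqrt (r + p * α ^ 2 + q / 4 * α ^ 4 + q₆ * α ^ 6)
        ≤ ((a + |b| / 2) * α ^ 2) / (Real.sqrt q₆ * α ^ 3) :=
      div_le_div₀ (by positivity) hnum hden0 hden
    refine h5.trans (le_of_eq ?_)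
    rw [hC]
    field_simp
  have htend : Tendsto g atTop (nhds 0) := by
    refine squeeze_zero_norm' hbound ?_
    exact Tendsto.div_atTop tendsto_const_nhds tendsto_id
  -- negative value
  set α₀ : ℝ := a / (|b| + 1) with hα₀def
  have hα₀pos : 0 < α₀ := by positivity
  have hnumneg : -a * α₀ + b / 2 * α₀ ^ 2 < 0 := by
    have hb : b ≤ |b| := le_abs_self b
    have h1 : α₀ * (|b| + 1) = a := by
      rw [hα₀def]; field_simp
    nlinarith [sq_nonneg α₀, hα₀pos]
  have hgneg : g α₀ < 0 := by
    rw [hg]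
    exact div_neg_of_neg_of_pos hnumneg (Real.sqrt_pos.mpr (hD α₀))
  refine ⟨hg0, htend, ⟨α₀, hα₀pos.le, hgneg⟩, ?_⟩
  -- minimizer
  obtain ⟨M, hM⟩ := eventually_atTop.mp (htend.eventually (eventually_gt_nhds hgneg))
  set M' : ℝ := max M α₀ with hM'
  have hcompact : IsCompact (Set.Icc (0 : ℝ) M') := isCompact_Icc
  have hne : (Set.Icc (0 : ℝ) M').Nonempty :=
    ⟨0, le_refl 0, le_trans hα₀pos.le (le_max_right _ _)⟩
  obtain ⟨αstar, hαmem, hαmin⟩ := hcompact.exists_isMinOn hne hcont.continuousOn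
  have hle₀ : g αstar ≤ g α₀ :=
    hαmin ⟨hα₀pos.le, le_max_right _ _⟩
  have hαneg : g αstar < 0 := lt_of_le_of_lt hle₀ hgneg
  have hαpos : 0 < αstar := by
    rcases lt_or_eq_of_le hαmem.1 with h | h
    · exact h
    · exfalso; rw [← h, hg0] at hαneg; exact lt_irrefl 0 hαneg
  refine ⟨αstar, hαpos, ?_, hαneg⟩
  intro α hα
  by_cases hcase : α ≤ M'
  · exact hαmin ⟨hα, hcase⟩
  · push_neg at hcase
    have : g α₀ < g α := hM α (le_trans (le_max_left _ _) hcase.le)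
    linarith
end
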